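/- arXiv:2109.13691 — 7 statements merged into one kernel-verified Lean document; each statement's English description precedes it below -/
import Mathlib

section
/- An interval exchange transformation T = (π, λ) with irreducible π and rationally independent length vector λ (i.e., Σ_α c_α λ_α = 0 with all c_α ∈ ℤ forces all c_α = 0) satisfies Keane's condition: if T^n(a) = b for discontinuities a, b of T and some n ∈ ℕ, then n = 1, a = T⁻¹(0), and b = 0. -/
open scoped BigOperators
noncomputable section

namespace RV

variable {A : Type*} [Fintype A] [DecidableEq A] {m : ℕ}

/-- Irreducibility of a permutation pair (positions are 0-indexed in `Fin (m+1)`,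
so `d = m+1` and the paper's levels `k = 1, …, d-1` correspond to `k = 0, …, m-1`). -/
def Irreducible (p0 p1 : A ≃ Fin (m+1)) : Prop :=
  ∀ k : ℕ, k < m → ¬ (∀ α : A, (p0 α : ℕ) ≤ k ↔ (p1 α : ℕ) ≤ k)

/-- The suspension cone `Θ^𝒜(π)`. -/
def InTheta (p0 p1 : A ≃ Fin (m+1)) (tau : A → ℝ) : Prop :=
  ∀ k : ℕ, k < m →
    (0 < ∑ α, if (p0 α : ℕ) ≤ k then tau α else 0) ∧
    ((∑ α, if (p1 α : ℕ) ≤ k then tau α else 0) < 0)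

/-- `π₀⁻¹(d)`. -/
def topSym (p0 : A ≃ Fin (m+1)) : A := p0.symm (Fin.last m)

/-- `π₁⁻¹(d)`. -/
def botSym (p1 : A ≃ Fin (m+1)) : A := p1.symm (Fin.last m)

/-- The (forward) winner of one step of Rauzy–Veech induction. -/
def fwWinner (p0 p1 : A ≃ Fin (m+1)) (lam : A → ℝ) : A :=
  if lam (botSym p1) < lam (topSym p0) then topSym p0 else botSym p1

/-- The (forward) loser of one step of Rauzy–Veech induction. -/
def fwLoser (p0 p1 : A ≃ Fin (m+1)) (lam : A → ℝ) : A :=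
  if lam (botSym p1) < lam (topSym p0) then botSym p1 else topSym p0

/-- The left endpoint of the interval `I_α`. -/
def leftEndF (p0 : A ≃ Fin (m+1)) (lam : A → ℝ) (α : A) : ℝ :=
  ∑ β, if (p0 β : ℕ) < (p0 α : ℕ) then lam β else 0

/-- The translation amount `δ_α`. -/
def deltaF (p0 p1 : A ≃ Fin (m+1)) (lam : A → ℝ) (α : A) : ℝ :=
  (∑ β, if (p1 β : ℕ) < (p1 α : ℕ) then lam β else 0) - leftEndF p0 lam α

/-- The interval exchange transformation `T = (π, λ)` on `[0, |λ|)`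
(extended by the identity off that interval). -/
def ietMap (p0 p1 : A ≃ Fin (m+1)) (lam : A → ℝ) : ℝ → ℝ := fun x =>
  if h : ∃ α : A, x ∈ Set.Ico (leftEndF p0 lam α) (leftEndF p0 lam α + lam α)
  then x + deltaF p0 p1 lam h.choose else x

/-! ### Auxiliary lemmas -/

lemma card_filter_pos' (p0 : A ≃ Fin (m+1)) (t : ℕ) :
    (Finset.univ.filter fun γ : A => t ≤ (p0 γ : ℕ)).card
      = ((Finset.range (m+1)).filter fun j => t ≤ j).card := by
  apply Finset.card_bij (fun γ _ => (p0 γ : ℕ))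
  · intro γ hγ
    simp only [Finset.mem_filter, Finset.mem_univ, true_and, Finset.mem_range] at *
    exact ⟨(p0 γ).isLt, hγ⟩
  · intro γ _ γ' _ h
    exact p0.injective (Fin.val_injective h)
  · intro j hj
    simp only [Finset.mem_filter, Finset.mem_univ, true_and, Finset.mem_range] at hj
    exact ⟨p0.symm ⟨j, hj.1⟩, by simpa using hj.2, by simp⟩

lemma card_range_filter' (N t : ℕ) :
    ((Finset.range N).filter fun j => t ≤ j).card = N - t := by
  have h : (Finset.range N).filter (fun j => t ≤ j) = Finset.Ico t N := by
    ext j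
    simp only [Finset.mem_filter, Finset.mem_range, Finset.mem_Ico]
    omega
  rw [h, Nat.card_Ico]

/-- The key combinatorial lemma: if `u, z : A → ℕ` satisfy
`∑_ε u ε · [π₀γ < π₀ε] = ∑_ε z ε · [π₁γ < π₁ε]` for every `γ`, and some letter `β`
not in top position `0` has `u β ≥ 1`, then the pair is reducible. -/
lemma comb_lemma (p0 p1 : A ≃ Fin (m+1)) (hirr : Irreducible p0 p1)
    (u z : A → ℕ) (β : A) (hβ : (p0 β : ℕ) ≠ 0) (huβ : 1 ≤ u β)
    (heq : ∀ γ : A, (∑ ε, u ε * (if (p0 γ : ℕ) < (p0 ε : ℕ) then 1 else 0))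
         = ∑ ε, z ε * (if (p1 γ : ℕ) < (p1 ε : ℕ) then 1 else 0)) : False := by
  classical
  set S : Finset A := Finset.univ.filter
      (fun γ => ∑ ε, u ε * (if (p0 γ : ℕ) < (p0 ε : ℕ) then 1 else 0) = 0) with hS
  have aux : ∀ (w : A → ℕ) (q : A ≃ Fin (m+1)) (γ : A),
      (∑ ε, w ε * (if (q γ : ℕ) < (q ε : ℕ) then 1 else 0)) = 0
        ↔ ∀ ε, (q γ : ℕ) < (q ε : ℕ) → w ε = 0 := by
    intro w q γ
    rw [Finset.sum_eq_zero_iff]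
    constructor
    · intro h ε hlt
      have := h ε (Finset.mem_univ ε)
      rwa [if_pos hlt, mul_one] at this
    · intro h ε _
      by_cases hlt : (q γ : ℕ) < (q ε : ℕ)
      · rw [if_pos hlt, mul_one]; exact h ε hlt
      · rw [if_neg hlt, mul_zero]
  have memS : ∀ γ, γ ∈ S ↔ ∀ ε, (p0 γ : ℕ) < (p0 ε : ℕ) → u ε = 0 := by
    intro γ
    rw [hS, Finset.mem_filter]
    simp only [Finset.mem_univ, true_and]
    exact aux u p0 γ
  have memS1 : ∀ γ, γ ∈ S ↔ ∀ ε, (p1 γ : ℕ) < (p1 ε : ℕ) → z ε = 0 := by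
    intro γ
    rw [hS, Finset.mem_filter]
    simp only [Finset.mem_univ, true_and]
    rw [heq γ]
    exact aux z p1 γ
  have htop : p0.symm (Fin.last m) ∈ S := by
    rw [memS]
    intro ε h
    exfalso
    have h1 : (p0 ε : ℕ) ≤ m := Nat.lt_succ_iff.mp (p0 ε).isLt
    have h2 : ((p0 (p0.symm (Fin.last m))) : ℕ) = m := by simp [Fin.last]
    omega
  have hbot : p0.symm 0 ∉ S := by
    rw [memS]
    intro h
    have h0 : ((p0 (p0.symm 0)) : ℕ) = 0 := by simp
    have := h β (by omega)
    omega
  have hSne : S.Nonempty := ⟨_, htop⟩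
  obtain ⟨γt, hγt, hmin0⟩ := S.exists_min_image (fun γ => (p0 γ : ℕ)) hSne
  obtain ⟨γs, hγs, hmin1⟩ := S.exists_min_image (fun γ => (p1 γ : ℕ)) hSne
  set t : ℕ := (p0 γt : ℕ) with ht
  set t' : ℕ := (p1 γs : ℕ) with ht'
  have hup0 : ∀ γ γ' : A, γ ∈ S → (p0 γ : ℕ) ≤ (p0 γ' : ℕ) → γ' ∈ S := by
    intro γ γ' hγ hle
    rw [memS] at hγ ⊢
    intro ε hlt
    exact hγ ε (by omega)
  have hup1 : ∀ γ γ' : A, γ ∈ S → (p1 γ : ℕ) ≤ (p1 γ' : ℕ) → γ' ∈ S := by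
    intro γ γ' hγ hle
    rw [memS1] at hγ ⊢
    intro ε hlt
    exact hγ ε (by omega)
  have hSeq0 : S = Finset.univ.filter (fun γ => t ≤ (p0 γ : ℕ)) := by
    ext γ
    simp only [Finset.mem_filter, Finset.mem_univ, true_and]
    exact ⟨fun h => hmin0 γ h, fun h => hup0 γt γ hγt h⟩
  have hSeq1 : S = Finset.univ.filter (fun γ => t' ≤ (p1 γ : ℕ)) := by
    ext γ
    simp only [Finset.mem_filter, Finset.mem_univ, true_and]
    exact ⟨fun h => hmin1 γ h, fun h => hup1 γs γ hγs h⟩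
  have htm : t ≤ m := Nat.lt_succ_iff.mp (p0 γt).isLt
  have ht'm : t' ≤ m := Nat.lt_succ_iff.mp (p1 γs).isLt
  have hcard : m + 1 - t = m + 1 - t' := by
    rw [← card_range_filter' (m+1) t, ← card_range_filter' (m+1) t',
      ← card_filter_pos' p0 t, ← card_filter_pos' p1 t', ← hSeq0, ← hSeq1]
  have htt' : t = t' := by omega
  have ht1 : 1 ≤ t := by
    by_contra h
    apply hbot
    rw [hSeq0, Finset.mem_filter]
    exact ⟨Finset.mem_univ _, by omega⟩
  apply hirr (t - 1) (by omega)
  intro γ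
  have hm0 : γ ∈ S ↔ t ≤ (p0 γ : ℕ) := by
    rw [hSeq0, Finset.mem_filter]; simp
  have hm1 : γ ∈ S ↔ t' ≤ (p1 γ : ℕ) := by
    rw [hSeq1, Finset.mem_filter]; simp
  constructor
  · intro h
    by_contra hc
    have hmem : γ ∈ S := hm1.mpr (by omega)
    rw [hm0] at hmem
    omega
  · intro h
    by_contra hc
    have hmem : γ ∈ S := hm0.mpr (by omega)
    rw [hm1] at hmem
    omega

lemma leftEnd_add_lam (p0 : A ≃ Fin (m+1)) (lam : A → ℝ) (ε : A) :
    leftEndF p0 lam ε + lam ε = ∑ β, if (p0 β : ℕ) ≤ (p0 ε : ℕ) then lam β else 0 := by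
  have key : ∀ β : A, (if (p0 β : ℕ) ≤ (p0 ε : ℕ) then lam β else 0)
      = (if (p0 β : ℕ) < (p0 ε : ℕ) then lam β else 0)
        + (if β = ε then lam β else 0) := by
    intro β
    rcases eq_or_ne β ε with rfl | hb
    · simp
    · have hne : (p0 β : ℕ) ≠ (p0 ε : ℕ) := fun h => hb (p0.injective (Fin.val_injective h))
      rw [if_neg hb, add_zero]
      by_cases hlt : (p0 β : ℕ) < (p0 ε : ℕ)
      · rw [if_pos hlt, if_pos hlt.le]
      · rw [if_neg hlt, if_neg (by omega)]
  rw [Finset.sum_congr rfl (fun β _ => key β), Finset.sum_add_distrib,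
    Finset.sum_ite_eq' Finset.univ ε lam, if_pos (Finset.mem_univ ε)]
  rfl

lemma leftEnd_le (p0 : A ≃ Fin (m+1)) (lam : A → ℝ) (hlam : ∀ α, 0 < lam α)
    {ε α : A} (h : (p0 ε : ℕ) < (p0 α : ℕ)) :
    leftEndF p0 lam ε + lam ε ≤ leftEndF p0 lam α := by
  rw [leftEnd_add_lam]
  apply Finset.sum_le_sum
  intro β _
  by_cases hb : (p0 β : ℕ) ≤ (p0 ε : ℕ)
  · rw [if_pos hb, if_pos (by omega)]
  · rw [if_neg hb]
    by_cases h2 : (p0 β : ℕ) < (p0 α : ℕ)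
    · rw [if_pos h2]; exact (hlam β).le
    · rw [if_neg h2]

lemma mem_unique (p0 : A ≃ Fin (m+1)) (lam : A → ℝ) (hlam : ∀ α, 0 < lam α)
    {α ε : A}
    (h : leftEndF p0 lam α ∈ Set.Ico (leftEndF p0 lam ε) (leftEndF p0 lam ε + lam ε)) :
    ε = α := by
  rcases lt_trichotomy ((p0 ε : ℕ)) ((p0 α : ℕ)) with hlt | heq | hgt
  · exfalso
    have := leftEnd_le p0 lam hlam hlt
    have h2 := h.2
    linarith
  · exact p0.injective (Fin.val_injective heq)
  · exfalso
    have := leftEnd_le p0 lam hlam hgt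
    have h1 := h.1
    have := hlam α
    linarith

lemma ietMap_leftEnd (p0 p1 : A ≃ Fin (m+1)) (lam : A → ℝ) (hlam : ∀ α, 0 < lam α)
    (α : A) :
    ietMap p0 p1 lam (leftEndF p0 lam α)
      = leftEndF p0 lam α + deltaF p0 p1 lam α := by
  have hex : ∃ ε : A, leftEndF p0 lam α
      ∈ Set.Ico (leftEndF p0 lam ε) (leftEndF p0 lam ε + lam ε) :=
    ⟨α, le_rfl, by linarith [hlam α]⟩
  rw [ietMap, dif_pos hex, mem_unique p0 lam hlam hex.choose_spec]

lemma iterate_eq (p0 p1 : A ≃ Fin (m+1)) (lam : A → ℝ) (n : ℕ) (x : ℝ) :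
    ∃ v : A → ℕ, (ietMap p0 p1 lam)^[n] x
      = x + ∑ ε, (v ε : ℝ) * deltaF p0 p1 lam ε := by
  induction n with
  | zero => exact ⟨0, by simp⟩
  | succ n ih =>
    obtain ⟨v, hv⟩ := ih
    rw [Function.iterate_succ_apply']
    set y := (ietMap p0 p1 lam)^[n] x with hy
    by_cases hex : ∃ ε : A, y ∈ Set.Ico (leftEndF p0 lam ε) (leftEndF p0 lam ε + lam ε)
    · refine ⟨fun ε' => v ε' + if ε' = hex.choose then 1 else 0, ?_⟩
      rw [ietMap, dif_pos hex]
      have hsum : ∑ ε, ((v ε + if ε = hex.choose then 1 else 0 : ℕ) : ℝ) * deltaF p0 p1 lam ε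
          = (∑ ε, (v ε : ℝ) * deltaF p0 p1 lam ε) + deltaF p0 p1 lam hex.choose := by
        push_cast
        simp only [add_mul, Finset.sum_add_distrib, ite_mul, one_mul, zero_mul,
          Finset.sum_ite_eq' Finset.univ, Finset.mem_univ, if_pos]
      rw [hsum]
      linarith [hv]
    · refine ⟨v, ?_⟩
      rw [ietMap, dif_neg hex]
      exact hv

/-- rational independence of `λ` implies Keane's condition. -/
theorem keane_of_rationally_independent
    (p0 p1 : A ≃ Fin (m+1)) (hirr : Irreducible p0 p1)
    (lam : A → ℝ) (hlam : ∀ α, 0 < lam α)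
    (hind : ∀ c : A → ℤ, (∑ α, (c α : ℝ) * lam α) = 0 → ∀ α, c α = 0) :
    ∀ a b : ℝ,
      (∃ α, (p0 α : ℕ) ≠ 0 ∧ a = leftEndF p0 lam α) →
      (∃ α, (p0 α : ℕ) ≠ 0 ∧ b = leftEndF p0 lam α) →
      ∀ n : ℕ, 1 ≤ n → (ietMap p0 p1 lam)^[n] a = b →
        n = 1 ∧ ietMap p0 p1 lam a = 0 ∧ b = 0 := by
  intro a b ha hb n hn hab
  exfalso
  obtain ⟨α, hα, ha'⟩ := ha
  obtain ⟨β, hβ, hb'⟩ := hb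
  subst ha' hb'
  obtain ⟨n', rfl⟩ : ∃ n', n = n' + 1 := ⟨n - 1, by omega⟩
  rw [Function.iterate_succ_apply, ietMap_leftEnd p0 p1 lam hlam α] at hab
  obtain ⟨v, hv⟩ := iterate_eq p0 p1 lam n' (leftEndF p0 lam α + deltaF p0 p1 lam α)
  rw [hab] at hv
  -- `hv : L₀ β = L₀ α + δ α + ∑ ε, v ε • δ ε`
  set c : A → ℤ := fun γ =>
    ((if (p0 γ : ℕ) < (p0 β : ℕ) then 1 else 0)
      + ∑ ε, (v ε : ℤ) * (if (p0 γ : ℕ) < (p0 ε : ℕ) then 1 else 0))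
    - ((if (p1 γ : ℕ) < (p1 α : ℕ) then 1 else 0)
      + ∑ ε, (v ε : ℤ) * (if (p1 γ : ℕ) < (p1 ε : ℕ) then 1 else 0)) with hc
  have key : ∀ (q : A ≃ Fin (m+1)),
      ∑ γ, (∑ ε, (v ε : ℝ) * (if (q γ : ℕ) < (q ε : ℕ) then 1 else 0)) * lam γ
        = ∑ ε, (v ε : ℝ) * leftEndF q lam ε := by
    intro q
    simp only [Finset.sum_mul]
    rw [Finset.sum_comm]
    refine Finset.sum_congr rfl (fun ε _ => ?_)
    rw [leftEndF, Finset.mul_sum]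
    refine Finset.sum_congr rfl (fun γ _ => ?_)
    by_cases h : (q γ : ℕ) < (q ε : ℕ) <;> simp [h]
  have hδ : ∀ ε, deltaF p0 p1 lam ε = leftEndF p1 lam ε - leftEndF p0 lam ε :=
    fun _ => rfl
  have hc0 : ∑ γ, (c γ : ℝ) * lam γ = 0 := by
    have expand : ∀ γ : A, ((c γ : ℝ)) * lam γ
        = ((if (p0 γ : ℕ) < (p0 β : ℕ) then lam γ else 0)
           + (∑ ε, (v ε : ℝ) * (if (p0 γ : ℕ) < (p0 ε : ℕ) then 1 else 0)) * lam γ)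
          - ((if (p1 γ : ℕ) < (p1 α : ℕ) then lam γ else 0)
           + (∑ ε, (v ε : ℝ) * (if (p1 γ : ℕ) < (p1 ε : ℕ) then 1 else 0)) * lam γ) := by
      intro γ
      rw [hc]
      push_cast
      by_cases h0 : (p0 γ : ℕ) < (p0 β : ℕ) <;> by_cases h1 : (p1 γ : ℕ) < (p1 α : ℕ) <;>
        simp [h0, h1] <;> ring
    rw [Finset.sum_congr rfl (fun γ _ => expand γ), Finset.sum_sub_distrib,
      Finset.sum_add_distrib, Finset.sum_add_distrib, key p0, key p1]
    have e1 : ∑ γ, (if (p0 γ : ℕ) < (p0 β : ℕ) then lam γ else 0) = leftEndF p0 lam β := rfl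
    have e2 : ∑ γ, (if (p1 γ : ℕ) < (p1 α : ℕ) then lam γ else 0) = leftEndF p1 lam α := rfl
    rw [e1, e2]
    have hsum : ∑ ε, (v ε : ℝ) * deltaF p0 p1 lam ε
        = ∑ ε, (v ε : ℝ) * leftEndF p1 lam ε - ∑ ε, (v ε : ℝ) * leftEndF p0 lam ε := by
      rw [← Finset.sum_sub_distrib]
      refine Finset.sum_congr rfl (fun ε _ => ?_)
      rw [hδ]; ring
    rw [hδ α] at hv
    rw [hsum] at hv
    linarith [hv]
  have hcz := hind c hc0
  apply comb_lemma p0 p1 hirr (fun ε => v ε + if ε = β then 1 else 0)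
      (fun ε => v ε + if ε = α then 1 else 0) β hβ (by simp)
  intro γ
  have hγ := hcz γ
  simp only [hc] at hγ
  have hZ : ((∑ ε, (v ε + if ε = β then 1 else 0)
          * (if (p0 γ : ℕ) < (p0 ε : ℕ) then 1 else 0) : ℕ) : ℤ)
      = ((∑ ε, (v ε + if ε = α then 1 else 0)
          * (if (p1 γ : ℕ) < (p1 ε : ℕ) then 1 else 0) : ℕ) : ℤ) := by
    push_cast
    simp only [add_mul, Finset.sum_add_distrib, ite_mul, one_mul, zero_mul,
      Finset.sum_ite_eq' Finset.univ, Finset.mem_univ, if_pos]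
    linarith [hγ]
  exact_mod_cast hZ

end RV
end
end

section
/- For an IET (π, λ) with λ_{π₀⁻¹(d)} ≠ λ_{π₁⁻¹(d)}, the first return map of (π,λ) to the interval [0, |λ| − min{λ_{π₀⁻¹(d)}, λ_{π₁⁻¹(d)}}) is again an interval exchange transformation of d intervals. -/
open scoped BigOperators
noncomputable section

namespace RV

variable {A : Type*} [Fintype A] [DecidableEq A] {m : ℕ}

/-! ### Auxiliary lemmas for the proof -/

set_option linter.unusedSectionVars false

section Aux

def L0 (p : A ≃ Fin (m+1)) (lam : A → ℝ) (α : A) : ℝ :=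
  ∑ β, if (p β : ℕ) < (p α : ℕ) then lam β else 0

def L1 (p : A ≃ Fin (m+1)) (lam : A → ℝ) (α : A) : ℝ :=
  ∑ β, if (p β : ℕ) ≤ (p α : ℕ) then lam β else 0

lemma pval_inj (p : A ≃ Fin (m+1)) {α β : A} (h : (p α : ℕ) = (p β : ℕ)) : α = β := by
  have := Fin.ext h
  exact p.injective this

lemma L1_eq (p : A ≃ Fin (m+1)) (lam : A → ℝ) (α : A) :
    L1 p lam α = L0 p lam α + lam α := by
  have key : ∀ β : A, (if (p β : ℕ) ≤ (p α : ℕ) then lam β else 0)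
      = (if (p β : ℕ) < (p α : ℕ) then lam β else 0) + (if β = α then lam β else 0) := by
    intro β
    by_cases hβ : β = α
    · subst hβ; simp
    · have hne : (p β : ℕ) ≠ (p α : ℕ) := fun h => hβ (pval_inj p h)
      split_ifs <;> simp_all <;> omega
  rw [L1, Finset.sum_congr rfl (fun β _ => key β), Finset.sum_add_distrib]
  simp [L0, Finset.sum_ite_eq' Finset.univ α lam]

lemma L0_nonneg (p : A ≃ Fin (m+1)) {lam : A → ℝ} (hl : ∀ α, 0 ≤ lam α) (α : A) :
    0 ≤ L0 p lam α := by
  apply Finset.sum_nonneg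
  intro β _
  split_ifs
  · exact hl β
  · exact le_refl 0

lemma L1_le_L0 (p : A ≃ Fin (m+1)) {lam : A → ℝ} (hl : ∀ α, 0 ≤ lam α) {α β : A}
    (h : (p α : ℕ) < (p β : ℕ)) : L1 p lam α ≤ L0 p lam β := by
  apply Finset.sum_le_sum
  intro γ _
  split_ifs with h1 h2 h2 <;> first | exact le_refl _ | omega | exact hl γ

lemma L1_last (p : A ≃ Fin (m+1)) (lam : A → ℝ) {α : A} (h : (p α : ℕ) = m) :
    L1 p lam α = ∑ β, lam β := by
  apply Finset.sum_congr rfl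
  intro β _
  have := (p β).isLt
  rw [if_pos (by omega)]

lemma L1_le_sub (p : A ≃ Fin (m+1)) {lam : A → ℝ} (hl : ∀ α, 0 ≤ lam α) {α β : A}
    (h : (p α : ℕ) < (p β : ℕ)) : L1 p lam α ≤ (∑ γ, lam γ) - lam β := by
  have hrw : (∑ γ, lam γ) - lam β = ∑ γ, if γ = β then 0 else lam γ := by
    have : ∀ γ : A, (if γ = β then 0 else lam γ) = lam γ - (if γ = β then lam γ else 0) := by
      intro γ; split_ifs <;> ring
    rw [Finset.sum_congr rfl (fun γ _ => this γ), Finset.sum_sub_distrib,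
      Finset.sum_ite_eq' Finset.univ β lam, if_pos (Finset.mem_univ β)]
  rw [hrw]
  apply Finset.sum_le_sum
  intro γ _
  split_ifs with h1 h2 h2 <;> first | exact le_refl _ | (subst h2; omega) | exact hl γ

lemma L0_succ (p : A ≃ Fin (m+1)) (lam : A → ℝ) {α β : A}
    (h : (p β : ℕ) = (p α : ℕ) + 1) : L0 p lam β = L1 p lam α := by
  apply Finset.sum_congr rfl
  intro γ _
  refine if_congr ?_ rfl rfl
  omega

lemma L0_bot (p : A ≃ Fin (m+1)) (lam : A → ℝ) {α : A} (h : (p α : ℕ) = 0) :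
    L0 p lam α = 0 := by
  rw [L0]
  apply Finset.sum_eq_zero
  intro β _
  rw [if_neg (by omega)]

lemma exists_mem (p : A ≃ Fin (m+1)) (lam : A → ℝ) (hl : ∀ α, 0 < lam α) {x : ℝ}
    (hx0 : 0 ≤ x) (hxL : x < ∑ β, lam β) :
    ∃ α, L0 p lam α ≤ x ∧ x < L1 p lam α := by
  classical
  set S : Finset (Fin (m+1)) := Finset.univ.filter (fun j => L0 p lam (p.symm j) ≤ x) with hS
  have h0 : (0 : Fin (m+1)) ∈ S := by
    rw [hS, Finset.mem_filter]
    refine ⟨Finset.mem_univ _, ?_⟩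
    rw [L0_bot p lam (by simp)]
    exact hx0
  have hne : S.Nonempty := ⟨0, h0⟩
  set j := S.max' hne with hj
  have hjS : j ∈ S := S.max'_mem hne
  have hjx : L0 p lam (p.symm j) ≤ x := by
    rw [hS, Finset.mem_filter] at hjS; exact hjS.2
  refine ⟨p.symm j, hjx, ?_⟩
  by_contra hcon
  push_neg at hcon
  by_cases hm : (j : ℕ) = m
  · have : L1 p lam (p.symm j) = ∑ β, lam β := by
      apply L1_last; rw [Equiv.apply_symm_apply]; exact hm
    rw [this] at hcon
    linarith
  · have hjlt : (j : ℕ) < m := by have := j.isLt; omega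
    set j' : Fin (m+1) := ⟨(j : ℕ) + 1, by omega⟩ with hj'
    have hsucc : L0 p lam (p.symm j') = L1 p lam (p.symm j) := by
      apply L0_succ
      rw [Equiv.apply_symm_apply, Equiv.apply_symm_apply]
    have hj'S : j' ∈ S := by
      rw [hS, Finset.mem_filter]
      exact ⟨Finset.mem_univ _, by rw [hsucc]; exact hcon⟩
    have hle := S.le_max' j' hj'S
    rw [← hj] at hle
    have : (j' : ℕ) ≤ (j : ℕ) := hle
    simp [hj'] at this

lemma mem_unique_s2 (p : A ≃ Fin (m+1)) {lam : A → ℝ} (hl : ∀ α, 0 ≤ lam α) {x : ℝ} {α β : A}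
    (h1 : L0 p lam α ≤ x ∧ x < L1 p lam α) (h2 : L0 p lam β ≤ x ∧ x < L1 p lam β) :
    α = β := by
  rcases lt_trichotomy ((p α : ℕ)) ((p β : ℕ)) with h | h | h
  · have := L1_le_L0 p hl h; linarith [h1.2, h2.1]
  · exact p.injective (Fin.ext h)
  · have := L1_le_L0 p hl h; linarith [h2.2, h1.1]

lemma leftEndF_eq (p0 : A ≃ Fin (m+1)) (lam : A → ℝ) (α : A) :
    leftEndF p0 lam α = L0 p0 lam α := rfl

lemma deltaF_eq (p0 p1 : A ≃ Fin (m+1)) (lam : A → ℝ) (α : A) :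
    deltaF p0 p1 lam α = L0 p1 lam α - L0 p0 lam α := rfl

lemma ietMap_apply (p0 p1 : A ≃ Fin (m+1)) (lam : A → ℝ) (hl : ∀ α, 0 < lam α) {x : ℝ} {α : A}
    (h : L0 p0 lam α ≤ x ∧ x < L1 p0 lam α) :
    ietMap p0 p1 lam x = x + deltaF p0 p1 lam α := by
  have hm : x ∈ Set.Ico (leftEndF p0 lam α) (leftEndF p0 lam α + lam α) := by
    rw [Set.mem_Ico, leftEndF_eq]
    exact ⟨h.1, by have h2 := h.2; rw [L1_eq] at h2; exact h2⟩
  have hex : ∃ β : A, x ∈ Set.Ico (leftEndF p0 lam β) (leftEndF p0 lam β + lam β) := ⟨α, hm⟩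
  rw [ietMap, dif_pos hex]
  have hspec := hex.choose_spec
  rw [Set.mem_Ico, leftEndF_eq] at hspec
  have : hex.choose = α := by
    apply mem_unique_s2 p0 (fun γ => le_of_lt (hl γ))
    · exact ⟨hspec.1, by rw [L1_eq]; exact hspec.2⟩
    · exact h
  rw [this]

lemma sum_pair_split (f g : A → ℝ) {b t : A} (hbt : b ≠ t)
    (h1 : ∀ β, β ≠ b → β ≠ t → f β = g β) (h2 : f b + f t = g b + g t) :
    ∑ β, f β = ∑ β, g β := by
  classical
  have hsub : ({b, t} : Finset A) ⊆ Finset.univ := Finset.subset_univ _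
  rw [← Finset.sum_sdiff hsub, ← Finset.sum_sdiff hsub (f := g)]
  rw [Finset.sum_pair hbt, Finset.sum_pair hbt]
  rw [h2]
  congr 1
  apply Finset.sum_congr rfl
  intro β hβ
  rw [Finset.mem_sdiff, Finset.mem_insert, Finset.mem_singleton] at hβ
  push_neg at hβ
  exact h1 β hβ.2.1 hβ.2.2

def shiftE (k : ℕ) (hk : k < m) : Fin (m+1) ≃ Fin (m+1) :=
  Equiv.ofBijective
    (fun j => if (j : ℕ) ≤ k then j else if h : (j : ℕ) = m then ⟨k+1, by omega⟩
      else ⟨(j : ℕ) + 1, by have := j.isLt; omega⟩)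
    (by
      rw [Finite.injective_iff_bijective.symm]
      intro j1 j2 h
      have hv : _ := congrArg (Fin.val) h
      simp only at hv
      have h1 := j1.isLt
      have h2 := j2.isLt
      apply Fin.ext
      split_ifs at hv <;> simp_all <;> omega)

lemma shiftE_val (k : ℕ) (hk : k < m) (j : Fin (m+1)) :
    ((shiftE k hk j : Fin (m+1)) : ℕ) =
      if (j : ℕ) ≤ k then (j : ℕ) else if (j : ℕ) = m then k+1 else (j : ℕ) + 1 := by
  rw [shiftE, Equiv.ofBijective_apply]
  split_ifs <;> rfl

end Aux


/-- if `λ_{π₀⁻¹(d)} ≠ λ_{π₁⁻¹(d)}`, the first return map of `(π,λ)` to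
`[0, |λ| - min{λ_{π₀⁻¹(d)}, λ_{π₁⁻¹(d)}})` is again an IET of `d` intervals. -/
theorem first_return_is_iet
    (p0 p1 : A ≃ Fin (m+1)) (hirr : Irreducible p0 p1)
    (lam : A → ℝ) (hlam : ∀ α, 0 < lam α)
    (hne : lam (topSym p0) ≠ lam (botSym p1)) :
    ∃ (q0 q1 : A ≃ Fin (m+1)) (lam' : A → ℝ), (∀ α, 0 < lam' α) ∧
      (∑ α, lam' α) = (∑ α, lam α) - min (lam (topSym p0)) (lam (botSym p1)) ∧
      ∀ x ∈ Set.Ico (0:ℝ) ((∑ α, lam α) - min (lam (topSym p0)) (lam (botSym p1))),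
        ∃ n : ℕ, 1 ≤ n ∧
          (ietMap p0 p1 lam)^[n] x ∈
            Set.Ico (0:ℝ) ((∑ α, lam α) - min (lam (topSym p0)) (lam (botSym p1))) ∧
          (∀ k, 1 ≤ k → k < n → (ietMap p0 p1 lam)^[k] x ∉
            Set.Ico (0:ℝ) ((∑ α, lam α) - min (lam (topSym p0)) (lam (botSym p1)))) ∧
          (ietMap p0 p1 lam)^[n] x = ietMap q0 q1 lam' x := by
  classical
  set t := topSym p0 with htdef
  set b := botSym p1 with hbdef
  have ht : (p0 t : ℕ) = m := by
    rw [htdef]; unfold topSym; rw [Equiv.apply_symm_apply]; simp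
  have hb : (p1 b : ℕ) = m := by
    rw [hbdef]; unfold botSym; rw [Equiv.apply_symm_apply]; simp
  have htb : t ≠ b := fun h => hne (by rw [h])
  have hbt : b ≠ t := Ne.symm htb
  have hlam0 : ∀ α, 0 ≤ lam α := fun α => le_of_lt (hlam α)
  have hL1t : L1 p0 lam t = ∑ β, lam β := L1_last p0 lam ht
  have hLt : L0 p0 lam t = (∑ β, lam β) - lam t := by
    have := L1_eq p0 lam t; linarith [hL1t]
  have hL1b : L1 p1 lam b = ∑ β, lam β := L1_last p1 lam hb
  have hLb : L0 p1 lam b = (∑ β, lam β) - lam b := by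
    have := L1_eq p1 lam b; linarith [hL1b]
  rcases lt_or_gt_of_ne hne with hw | hw
  · -- BOTTOM case : lam t < lam b ; loser is t
    have hkm : (p0 b : ℕ) < m := by
      have h1 := (p0 b).isLt
      rcases Nat.lt_or_ge ((p0 b : ℕ)) m with h | h
      · exact h
      · exact absurd (pval_inj p0 (by omega : (p0 b : ℕ) = (p0 t : ℕ))) hbt
    set k := (p0 b : ℕ) with hkdef
    set q0 := p0.trans (shiftE k hkm) with hq0def
    set lam' := Function.update lam b (lam b - lam t) with hlamdef
    have q0val : ∀ α, (q0 α : ℕ) =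
        if (p0 α : ℕ) ≤ k then (p0 α : ℕ)
        else if (p0 α : ℕ) = m then k+1 else (p0 α : ℕ) + 1 :=
      fun α => shiftE_val k hkm (p0 α)
    have hl'b : lam' b = lam b - lam t := by rw [hlamdef]; simp
    have hl'ne : ∀ β, β ≠ b → lam' β = lam β := fun β h => Function.update_of_ne h _ lam
    have hlam' : ∀ α, 0 < lam' α := by
      intro α
      by_cases hα : α = b
      · subst hα; rw [hl'b]; linarith
      · rw [hl'ne α hα]; exact hlam α
    have hlam0' : ∀ α, 0 ≤ lam' α := fun α => le_of_lt (hlam' α)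
    have hmin : min (lam t) (lam b) = lam t := min_eq_left hw.le
    have hsum' : (∑ α, lam' α) = (∑ α, lam α) - lam t := by
      rw [hlamdef, Finset.sum_update_of_mem (Finset.mem_univ b),
        Finset.sum_sdiff_eq_sub (Finset.subset_univ {b}), Finset.sum_singleton]
      ring
    have hq0t : (q0 t : ℕ) = k + 1 := by
      rw [q0val t, ht, if_neg (by omega), if_pos rfl]
    have hq0b : (q0 b : ℕ) = k := by
      rw [q0val b]; simp [hkdef]
    have hvt0 : ∀ β, β ≠ t → (p0 β : ℕ) ≠ m := fun β h e => h (pval_inj p0 (e.trans ht.symm))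
    have hvb1 : ∀ β, β ≠ b → (p1 β : ℕ) ≠ m := fun β h e => h (pval_inj p1 (e.trans hb.symm))
    have HB0 : ∀ α, L0 p1 lam' α = L0 p1 lam α := by
      intro α
      apply Finset.sum_congr rfl
      intro β _
      by_cases hc : (p1 β : ℕ) < (p1 α : ℕ)
      · have hβ : β ≠ b := by intro e; subst e; have := (p1 α).isLt; omega
        rw [if_pos hc, if_pos hc, hl'ne β hβ]
      · rw [if_neg hc, if_neg hc]
    have HB1 : ∀ α, α ≠ t → L0 q0 lam' α = L0 p0 lam α := by
      intro α hαt
      have ham : (p0 α : ℕ) ≠ m := hvt0 α hαt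
      have haLt := (p0 α).isLt
      apply sum_pair_split _ _ hbt
      · intro β hβb hβt
        have hcm : (p0 β : ℕ) ≠ m := hvt0 β hβt
        have hcLt := (p0 β).isLt
        rw [hl'ne β hβb]
        refine if_congr ?_ rfl rfl
        rw [q0val α, q0val β]
        split_ifs <;> omega
      · rw [hl'ne t htb, hl'b, hq0t, hq0b, ht, q0val α]
        split_ifs <;> first | ring1 | omega | (exfalso; omega)
    have HB2 : L0 q0 lam' t = L0 p0 lam b + (lam b - lam t) := by
      have step1 : L0 q0 lam' t = L1 p0 lam' b := by
        apply Finset.sum_congr rfl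
        intro β _
        refine if_congr ?_ rfl rfl
        rw [q0val β, hq0t]
        have := (p0 β).isLt
        split_ifs <;> omega
      have step2 : L0 p0 lam' b = L0 p0 lam b := by
        apply Finset.sum_congr rfl
        intro β _
        by_cases hc : (p0 β : ℕ) < k
        · have hβ : β ≠ b := by intro e; subst e; omega
          rw [if_pos hc, if_pos hc, hl'ne β hβ]
        · rw [if_neg hc, if_neg hc]
      rw [step1, L1_eq, step2, hl'b]
    refine ⟨q0, p1, lam', hlam', by rw [hmin]; exact hsum', ?_⟩
    intro x hx
    rw [hmin] at hx ⊢
    rw [Set.mem_Ico] at hx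
    obtain ⟨hx0, hxU⟩ := hx
    have hxS : x < ∑ β, lam β := by linarith [hlam t]
    obtain ⟨α, hα0, hα1⟩ := exists_mem p0 lam hlam hx0 hxS
    have hα1' : x < L0 p0 lam α + lam α := by rw [← L1_eq]; exact hα1
    have hαt : α ≠ t := by
      intro e; subst e; rw [hLt] at hα0; linarith
    have hT1 : ietMap p0 p1 lam x = x + deltaF p0 p1 lam α :=
      ietMap_apply p0 p1 lam hlam ⟨hα0, hα1⟩
    by_cases hαb : α = b
    · subst hαb
      have hδb : deltaF p0 p1 lam b = ((∑ β, lam β) - lam b) - L0 p0 lam b := by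
        rw [deltaF_eq, hLb]
      by_cases hsplit : x < L0 p0 lam b + (lam b - lam t)
      · -- n = 1, left part of I_b
        have h0b : (0:ℝ) ≤ (∑ β, lam β) - lam b := by
          rw [← hLb]; exact L0_nonneg p1 hlam0 b
        refine ⟨1, le_refl 1, ?_, by intro kk h1 h2; omega, ?_⟩
        · rw [Function.iterate_one, hT1, Set.mem_Ico, hδb]
          constructor
          · linarith
          · linarith
        · have hmem : L0 q0 lam' b ≤ x ∧ x < L1 q0 lam' b := by
            constructor
            · rw [HB1 b hbt]; exact hα0
            · rw [L1_eq, HB1 b hbt, hl'b]; exact hsplit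
          rw [Function.iterate_one, hT1, ietMap_apply q0 p1 lam' hlam' hmem,
            deltaF_eq q0 p1 lam' b, HB0 b, HB1 b hbt, deltaF_eq p0 p1 lam b]
      · -- n = 2, right part of I_b
        push_neg at hsplit
        have hy1 : (∑ β, lam β) - lam t ≤ x + deltaF p0 p1 lam b := by
          rw [hδb]; linarith
        have hy2 : x + deltaF p0 p1 lam b < ∑ β, lam β := by
          rw [hδb]; linarith
        have hyt : L0 p0 lam t ≤ x + deltaF p0 p1 lam b ∧
            x + deltaF p0 p1 lam b < L1 p0 lam t := by
          constructor
          · rw [hLt]; linarith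
          · rw [hL1t]; exact hy2
        have hT2 : ietMap p0 p1 lam (x + deltaF p0 p1 lam b)
            = x + deltaF p0 p1 lam b + deltaF p0 p1 lam t :=
          ietMap_apply p0 p1 lam hlam hyt
        have hδt : deltaF p0 p1 lam t = L0 p1 lam t - ((∑ β, lam β) - lam t) := by
          rw [deltaF_eq, hLt]
        have hit2 : (ietMap p0 p1 lam)^[2] x
            = x + deltaF p0 p1 lam b + deltaF p0 p1 lam t := by
          rw [show (2:ℕ) = 1 + 1 from rfl, Function.iterate_succ_apply',
            Function.iterate_one, hT1, hT2]
        have hnn : 0 ≤ L0 p1 lam t := L0_nonneg p1 hlam0 t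
        have hub : L1 p1 lam t ≤ (∑ γ, lam γ) - lam b := by
          apply L1_le_sub p1 hlam0
          have h1 := (p1 t).isLt
          have h2 := hvb1 t htb
          omega
        have hubL : L0 p1 lam t + lam t ≤ (∑ γ, lam γ) - lam b := by
          rw [← L1_eq]; exact hub
        refine ⟨2, by norm_num, ?_, ?_, ?_⟩
        · rw [hit2, Set.mem_Ico]
          constructor
          · rw [hδt]; linarith
          · rw [hδt]; linarith
        · intro kk h1 h2
          have : kk = 1 := by omega
          subst this
          rw [Function.iterate_one, hT1, Set.mem_Ico]
          intro hcon
          linarith [hcon.2, hy1]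
        · have hmem : L0 q0 lam' t ≤ x ∧ x < L1 q0 lam' t := by
            constructor
            · rw [HB2]; linarith
            · rw [L1_eq, HB2, hl'ne t htb]; linarith
          rw [hit2, ietMap_apply q0 p1 lam' hlam' hmem,
            deltaF_eq q0 p1 lam' t, HB0 t, HB2, hδb, hδt]
          ring
    · -- n = 1, α ∉ {b, t}
      have hαm : (p1 α : ℕ) ≠ m := hvb1 α hαb
      have hub : L1 p1 lam α ≤ (∑ γ, lam γ) - lam b := by
        apply L1_le_sub p1 hlam0
        have h1 := (p1 α).isLt
        omega
      have hubL : L0 p1 lam α + lam α ≤ (∑ γ, lam γ) - lam b := by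
        rw [← L1_eq]; exact hub
      have hnn : 0 ≤ L0 p1 lam α := L0_nonneg p1 hlam0 α
      refine ⟨1, le_refl 1, ?_, by intro kk h1 h2; omega, ?_⟩
      · rw [Function.iterate_one, hT1, Set.mem_Ico, deltaF_eq]
        constructor
        · linarith
        · linarith
      · have hmem : L0 q0 lam' α ≤ x ∧ x < L1 q0 lam' α := by
          constructor
          · rw [HB1 α hαt]; exact hα0
          · rw [L1_eq, HB1 α hαt, hl'ne α hαb]; exact hα1'
        rw [Function.iterate_one, hT1, ietMap_apply q0 p1 lam' hlam' hmem,
          deltaF_eq q0 p1 lam' α, HB0 α, HB1 α hαt, deltaF_eq p0 p1 lam α]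
  · -- TOP case : lam b < lam t ; loser is b
    have hkm : (p1 t : ℕ) < m := by
      have h1 := (p1 t).isLt
      rcases Nat.lt_or_ge ((p1 t : ℕ)) m with h | h
      · exact h
      · exact absurd (pval_inj p1 (by omega : (p1 t : ℕ) = (p1 b : ℕ))) htb
    set k := (p1 t : ℕ) with hkdef
    set q1 := p1.trans (shiftE k hkm) with hq1def
    set lam' := Function.update lam t (lam t - lam b) with hlamdef
    have q1val : ∀ α, (q1 α : ℕ) =
        if (p1 α : ℕ) ≤ k then (p1 α : ℕ)
        else if (p1 α : ℕ) = m then k+1 else (p1 α : ℕ) + 1 :=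
      fun α => shiftE_val k hkm (p1 α)
    have hl't : lam' t = lam t - lam b := by rw [hlamdef]; simp
    have hl'ne : ∀ β, β ≠ t → lam' β = lam β := fun β h => Function.update_of_ne h _ lam
    have hlam' : ∀ α, 0 < lam' α := by
      intro α
      by_cases hα : α = t
      · subst hα; rw [hl't]; linarith
      · rw [hl'ne α hα]; exact hlam α
    have hlam0' : ∀ α, 0 ≤ lam' α := fun α => le_of_lt (hlam' α)
    have hmin : min (lam t) (lam b) = lam b := min_eq_right hw.le
    have hsum' : (∑ α, lam' α) = (∑ α, lam α) - lam b := by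
      rw [hlamdef, Finset.sum_update_of_mem (Finset.mem_univ t),
        Finset.sum_sdiff_eq_sub (Finset.subset_univ {t}), Finset.sum_singleton]
      ring
    have hq1b : (q1 b : ℕ) = k + 1 := by
      rw [q1val b, hb, if_neg (by omega), if_pos rfl]
    have hq1t : (q1 t : ℕ) = k := by
      rw [q1val t]; simp [hkdef]
    have hvb1 : ∀ β, β ≠ b → (p1 β : ℕ) ≠ m := fun β h e => h (pval_inj p1 (e.trans hb.symm))
    have Hq0 : ∀ α, L0 p0 lam' α = L0 p0 lam α := by
      intro α
      apply Finset.sum_congr rfl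
      intro β _
      by_cases hc : (p0 β : ℕ) < (p0 α : ℕ)
      · have hβ : β ≠ t := by intro e; subst e; have := (p0 α).isLt; omega
        rw [if_pos hc, if_pos hc, hl'ne β hβ]
      · rw [if_neg hc, if_neg hc]
    have HT1 : ∀ α, α ≠ b → L0 q1 lam' α = L0 p1 lam α := by
      intro α hαb
      have ham : (p1 α : ℕ) ≠ m := hvb1 α hαb
      have haLt := (p1 α).isLt
      apply sum_pair_split _ _ hbt
      · intro β hβb hβt
        have hcm : (p1 β : ℕ) ≠ m := hvb1 β hβb
        have hcLt := (p1 β).isLt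
        rw [hl'ne β hβt]
        refine if_congr ?_ rfl rfl
        rw [q1val α, q1val β]
        split_ifs <;> omega
      · rw [hl'ne b hbt, hl't, hq1b, hq1t, hb, q1val α]
        split_ifs <;> first | ring1 | omega | (exfalso; omega)
    have HT2 : L0 q1 lam' b = L0 p1 lam t + (lam t - lam b) := by
      have step1 : L0 q1 lam' b = L1 p1 lam' t := by
        apply Finset.sum_congr rfl
        intro β _
        refine if_congr ?_ rfl rfl
        rw [q1val β, hq1b]
        have := (p1 β).isLt
        split_ifs <;> omega
      have step2 : L0 p1 lam' t = L0 p1 lam t := by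
        apply Finset.sum_congr rfl
        intro β _
        by_cases hc : (p1 β : ℕ) < k
        · have hβ : β ≠ t := by intro e; subst e; omega
          rw [if_pos hc, if_pos hc, hl'ne β hβ]
        · rw [if_neg hc, if_neg hc]
      rw [step1, L1_eq, step2, hl't]
    refine ⟨p0, q1, lam', hlam', by rw [hmin]; exact hsum', ?_⟩
    intro x hx
    rw [hmin] at hx ⊢
    rw [Set.mem_Ico] at hx
    obtain ⟨hx0, hxU⟩ := hx
    have hxS : x < ∑ β, lam β := by linarith [hlam b]
    obtain ⟨α, hα0, hα1⟩ := exists_mem p0 lam hlam hx0 hxS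
    have hα1' : x < L0 p0 lam α + lam α := by rw [← L1_eq]; exact hα1
    have hT1 : ietMap p0 p1 lam x = x + deltaF p0 p1 lam α :=
      ietMap_apply p0 p1 lam hlam ⟨hα0, hα1⟩
    by_cases hαb : α = b
    · -- n = 2 : x ∈ I_b
      subst hαb
      have hδb : deltaF p0 p1 lam b = ((∑ β, lam β) - lam b) - L0 p0 lam b := by
        rw [deltaF_eq, hLb]
      have hy1 : (∑ β, lam β) - lam b ≤ x + deltaF p0 p1 lam b := by
        rw [hδb]; linarith
      have hy2 : x + deltaF p0 p1 lam b < ∑ β, lam β := by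
        rw [hδb]; linarith
      have hyt : L0 p0 lam t ≤ x + deltaF p0 p1 lam b ∧
          x + deltaF p0 p1 lam b < L1 p0 lam t := by
        constructor
        · rw [hLt]; linarith
        · rw [hL1t]; exact hy2
      have hT2 : ietMap p0 p1 lam (x + deltaF p0 p1 lam b)
          = x + deltaF p0 p1 lam b + deltaF p0 p1 lam t :=
        ietMap_apply p0 p1 lam hlam hyt
      have hδt : deltaF p0 p1 lam t = L0 p1 lam t - ((∑ β, lam β) - lam t) := by
        rw [deltaF_eq, hLt]
      have hit2 : (ietMap p0 p1 lam)^[2] x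
          = x + deltaF p0 p1 lam b + deltaF p0 p1 lam t := by
        rw [show (2:ℕ) = 1 + 1 from rfl, Function.iterate_succ_apply',
          Function.iterate_one, hT1, hT2]
      have hnn : 0 ≤ L0 p1 lam t := L0_nonneg p1 hlam0 t
      have hub : L1 p1 lam t ≤ (∑ γ, lam γ) - lam b := by
        apply L1_le_sub p1 hlam0
        omega
      have hubL : L0 p1 lam t + lam t ≤ (∑ γ, lam γ) - lam b := by
        rw [← L1_eq]; exact hub
      refine ⟨2, by norm_num, ?_, ?_, ?_⟩
      · rw [hit2, Set.mem_Ico]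
        constructor
        · rw [hδt]; linarith
        · rw [hδt]; linarith
      · intro kk h1 h2
        have : kk = 1 := by omega
        subst this
        rw [Function.iterate_one, hT1, Set.mem_Ico]
        intro hcon
        linarith [hcon.2, hy1]
      · have hmem : L0 p0 lam' b ≤ x ∧ x < L1 p0 lam' b := by
          constructor
          · rw [Hq0 b]; exact hα0
          · rw [L1_eq, Hq0 b, hl'ne b hbt]; exact hα1'
        rw [hit2, ietMap_apply p0 q1 lam' hlam' hmem,
          deltaF_eq p0 q1 lam' b, HT2, Hq0 b, hδb, hδt]
        ring
    · -- n = 1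
      have hαm : (p1 α : ℕ) ≠ m := hvb1 α hαb
      have hub : L1 p1 lam α ≤ (∑ γ, lam γ) - lam b := by
        apply L1_le_sub p1 hlam0
        have h1 := (p1 α).isLt
        omega
      have hubL : L0 p1 lam α + lam α ≤ (∑ γ, lam γ) - lam b := by
        rw [← L1_eq]; exact hub
      have hnn : 0 ≤ L0 p1 lam α := L0_nonneg p1 hlam0 α
      refine ⟨1, le_refl 1, ?_, by intro kk h1 h2; omega, ?_⟩
      · rw [Function.iterate_one, hT1, Set.mem_Ico, deltaF_eq]
        constructor
        · linarith
        · linarith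
      · have hmem : L0 p0 lam' α ≤ x ∧ x < L1 p0 lam' α := by
          constructor
          · rw [Hq0 α]; exact hα0
          · rw [L1_eq, Hq0 α]
            by_cases hαt : α = t
            · subst hαt; rw [hl't, hLt]; linarith
            · rw [hl'ne α hαt]; exact hα1'
        rw [Function.iterate_one, hT1, ietMap_apply p0 q1 lam' hlam' hmem,
          deltaF_eq p0 q1 lam' α, HT1 α hαb, Hq0 α, deltaF_eq p0 p1 lam α]

end RV
end
end

section
/- If the backward Rauzy-Veech induction orbit of (π, λ, τ) is defined for all n ∈ ℕ, then the minimum entry min_{α,β} A^{−n}_{αβ}(π,λ,τ) of the backward Rauzy-Veech matrices is non-decreasing in n, and the total length |λ^{−n}| = Σ_α λ^{−n}_α tends to infinity as n → ∞. -/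
open scoped BigOperators
noncomputable section

namespace RV

variable {A : Type*} [Fintype A] [DecidableEq A] {m : ℕ}

/-- The data `(π, λ, τ)` of a translation surface (polygonal representation). -/
structure Datum (A : Type*) [Fintype A] (m : ℕ) where
  p0 : A ≃ Fin (m+1)
  p1 : A ≃ Fin (m+1)
  lam : A → ℝ
  tau : A → ℝ

/-- The backward winner of `(π, λ, τ)`. -/
def bwWinner (D : Datum A m) : A :=
  if (∑ α, D.tau α) < 0 then topSym D.p0 else botSym D.p1

/-- The backward loser of `(π, λ, τ)`. -/
def bwLoser (D : Datum A m) : A :=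
  if (∑ α, D.tau α) < 0 then botSym D.p1 else topSym D.p0

/-- One step of the (forward) extended Rauzy–Veech induction: `E = R(D)`. -/
def Step (D E : Datum A m) : Prop :=
  (E.tau = Function.update D.tau (fwWinner D.p0 D.p1 D.lam)
      (D.tau (fwWinner D.p0 D.p1 D.lam) - D.tau (fwLoser D.p0 D.p1 D.lam))) ∧
  ((D.lam (botSym D.p1) < D.lam (topSym D.p0) ∧ E.p0 = D.p0 ∧
      (∀ α : A, (E.p1 α : ℕ) =
        if (D.p1 α : ℕ) ≤ (D.p1 (topSym D.p0) : ℕ) then (D.p1 α : ℕ)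
        else if α = botSym D.p1 then (D.p1 (topSym D.p0) : ℕ) + 1
        else (D.p1 α : ℕ) + 1) ∧
      E.lam = Function.update D.lam (topSym D.p0)
        (D.lam (topSym D.p0) - D.lam (botSym D.p1)))
   ∨
   (D.lam (topSym D.p0) < D.lam (botSym D.p1) ∧ E.p1 = D.p1 ∧
      (∀ α : A, (E.p0 α : ℕ) =
        if (D.p0 α : ℕ) ≤ (D.p0 (botSym D.p1) : ℕ) then (D.p0 α : ℕ)
        else if α = topSym D.p0 then (D.p0 (botSym D.p1) : ℕ) + 1
        else (D.p0 α : ℕ) + 1) ∧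
      E.lam = Function.update D.lam (botSym D.p1)
        (D.lam (botSym D.p1) - D.lam (topSym D.p0))))

/-- `(π, λ, τ) ∈ S₀^𝒜 × Λ^𝒜 × Θ^𝒜`. -/
def Valid (D : Datum A m) : Prop :=
  (∀ α, 0 < D.lam α) ∧ InTheta D.p0 D.p1 D.tau ∧ Irreducible D.p0 D.p1

/-- An indefinitely defined backward Rauzy–Veech induction orbit:
`x n = R⁻ⁿ(x 0)`, i.e. each `x (n+1)` is mapped to `x n` by one forward step. -/
def IsBackwardOrbit (x : ℕ → Datum A m) : Prop :=
  ∀ n, Step (x (n+1)) (x n) ∧ Valid (x n)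

private lemma step_entry (w l : A) (M : Matrix A A ℝ) (i j : A) :
    (((1 + Matrix.single w l 1) * M : Matrix A A ℝ)) i j
      = M i j + if i = w then M l j else 0 := by
  rw [add_mul, one_mul, Matrix.add_apply]
  congr 1
  simp [Matrix.mul_apply, Matrix.single, ite_and, eq_comm]

/-- along an indefinitely defined backward Rauzy–Veech orbit, the minimal
entry of the backward matrices `A⁻ⁿ = B n` is non-decreasing in `n`, and the total
length `|λ⁻ⁿ| = ∑_α (B n · λ)_α` tends to infinity. -/
theorem backward_matrices_min_monotone_and_length_tendsto_atTop
    (x : ℕ → Datum A m) (hx : IsBackwardOrbit x)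
    (B : ℕ → Matrix A A ℝ) (hB0 : B 0 = 1)
    (hBrec : ∀ n, B (n+1) =
      (1 + Matrix.single (bwWinner (x n)) (bwLoser (x n)) 1) * B n) :
    Monotone (fun n => ⨅ p : A × A, B n p.1 p.2) ∧
    Filter.Tendsto (fun n => ∑ α, (B n).mulVec (x 0).lam α) Filter.atTop Filter.atTop := by
  have hA : Nonempty A := ⟨(x 0).p0.symm 0⟩
  -- entrywise nonnegativity of B n
  have hnn : ∀ n i j, 0 ≤ B n i j := by
    intro n
    induction n with
    | zero =>
      intro i j
      rw [hB0]
      by_cases h : i = j <;> simp [Matrix.one_apply, h]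
    | succ n ih =>
      intro i j
      rw [hBrec n, step_entry]
      have := ih i j
      have := ih (bwLoser (x n)) j
      split <;> nlinarith
  -- entrywise monotonicity in n (one step)
  have hmono : ∀ n i j, B n i j ≤ B (n+1) i j := by
    intro n i j
    rw [hBrec n, step_entry]
    have := hnn n (bwLoser (x n)) j
    split <;> nlinarith
  -- row sums are at least 1
  have hrow : ∀ n i, (1:ℝ) ≤ ∑ j, B n i j := by
    intro n
    induction n with
    | zero =>
      intro i
      simp [hB0, Matrix.one_apply]
    | succ n ih =>
      intro i
      calc (1:ℝ) ≤ ∑ j, B n i j := ih i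
        _ ≤ ∑ j, B (n+1) i j := Finset.sum_le_sum (fun j _ => hmono n i j)
  constructor
  · -- monotonicity of the minimal entry
    apply monotone_nat_of_le_succ
    intro n
    apply le_ciInf
    intro p
    refine le_trans (ciInf_le ?_ p) (hmono n p.1 p.2)
    exact (Set.finite_range _).bddBelow
  · -- the total length tends to infinity
    obtain ⟨α₀, -, hα₀⟩ := Finset.exists_min_image Finset.univ (x 0).lam
      Finset.univ_nonempty
    set c : ℝ := (x 0).lam α₀ with hc
    have hcpos : 0 < c := ((hx 0).2).1 α₀
    have hcle : ∀ β, c ≤ (x 0).lam β := fun β => hα₀ β (Finset.mem_univ β)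
    set S : ℕ → ℝ := fun n => ∑ α, (B n).mulVec (x 0).lam α with hS
    have hstep : ∀ n, S n + c ≤ S (n+1) := by
      intro n
      have hexp : S (n+1)
          = S n + (B n).mulVec (x 0).lam (bwLoser (x n)) := by
        simp only [hS, Matrix.mulVec, dotProduct]
        have key : ∀ i, (∑ j, B (n+1) i j * (x 0).lam j)
            = (∑ j, B n i j * (x 0).lam j)
              + if i = bwWinner (x n)
                then ∑ j, B n (bwLoser (x n)) j * (x 0).lam j else 0 := by
          intro i
          have hij : ∀ j, B (n+1) i j
              = B n i j + if i = bwWinner (x n) then B n (bwLoser (x n)) j else 0 := by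
            intro j; rw [hBrec n, step_entry]
          simp only [hij, add_mul, ite_mul, zero_mul, Finset.sum_add_distrib]
          congr 1
          by_cases h : i = bwWinner (x n) <;> simp [h]
        rw [Finset.sum_congr rfl (fun i _ => key i), Finset.sum_add_distrib]
        congr 1
        rw [Finset.sum_ite_eq' Finset.univ (bwWinner (x n))]
        simp
      have hlow : c ≤ (B n).mulVec (x 0).lam (bwLoser (x n)) := by
        have h1 : c * 1 ≤ c * ∑ j, B n (bwLoser (x n)) j :=
          mul_le_mul_of_nonneg_left (hrow n _) hcpos.le
        calc c = c * 1 := (mul_one c).symm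
          _ ≤ c * ∑ j, B n (bwLoser (x n)) j := h1
          _ = ∑ j, B n (bwLoser (x n)) j * c := by
              rw [Finset.mul_sum]; exact Finset.sum_congr rfl (fun j _ => mul_comm _ _)
          _ ≤ ∑ j, B n (bwLoser (x n)) j * (x 0).lam j :=
              Finset.sum_le_sum (fun j _ =>
                mul_le_mul_of_nonneg_left (hcle j) (hnn n _ j))
          _ = (B n).mulVec (x 0).lam (bwLoser (x n)) := rfl
      linarith [hexp, hlow]
    have hlin : ∀ n, S 0 + n * c ≤ S n := by
      intro n
      induction n with
      | zero => simp
      | succ n ih =>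
        have := hstep n
        push_cast
        push_cast at ih
        nlinarith
    have htend : Filter.Tendsto (fun n : ℕ => S 0 + n * c) Filter.atTop Filter.atTop := by
      apply Filter.tendsto_atTop_add_const_left
      exact Filter.Tendsto.atTop_mul_const hcpos tendsto_natCast_atTop_atTop
    exact Filter.tendsto_atTop_mono hlin htend

end RV
end
end

section
/- The surface (π,λ,τ) is of backward 'top' type (i.e., Σ_α τ_α < 0) if and only if R⁻¹(π,λ,τ) is of forward 'top' type; similarly for 'bottom' type. Moreover, α is the backward winner of R⁻¹ at (π,λ,τ) if and only if α is the (forward) winner of R at R⁻¹(π,λ,τ). -/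
open scoped BigOperators
noncomputable section

namespace RV

variable {A : Type*} [Fintype A] [DecidableEq A] {m : ℕ}

lemma sum_ite_le_pred (hm : 1 ≤ m) (p : A ≃ Fin (m+1)) (tau : A → ℝ) :
    (∑ α, if (p α : ℕ) ≤ m - 1 then tau α else 0)
      = (∑ α, tau α) - tau (p.symm (Fin.last m)) := by
  have h : ∀ α : A, (if (p α : ℕ) ≤ m - 1 then tau α else 0)
      = tau α - (if α = p.symm (Fin.last m) then tau α else 0) := by
    intro α
    by_cases hα : α = p.symm (Fin.last m)
    · subst hα
      rw [if_neg (show ¬ ((p (p.symm (Fin.last m)) : ℕ) ≤ m - 1) by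
        simp only [Equiv.apply_symm_apply, Fin.val_last]; omega), if_pos rfl]
      ring
    · have hne : p α ≠ Fin.last m := fun h => hα (by rw [← h, Equiv.symm_apply_apply])
      have hlt : (p α : ℕ) < m := by
        have := (p α).isLt
        have : (p α : ℕ) ≠ m := fun h => hne (Fin.ext (by simp [h, Fin.val_last]))
        omega
      rw [if_pos (by omega), if_neg hα]; ring
  simp only [h]
  rw [Finset.sum_sub_distrib, Finset.sum_ite_eq' Finset.univ (p.symm (Fin.last m)) tau,
    if_pos (Finset.mem_univ _)]

lemma sum_update_sub (f : A → ℝ) (w l : A) :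
    (∑ α, Function.update f w (f w - f l) α) = (∑ α, f α) - f l := by
  rw [Finset.sum_update_of_mem (Finset.mem_univ w),
    Finset.sum_sdiff_eq_sub (Finset.singleton_subset_iff.mpr (Finset.mem_univ w)),
    Finset.sum_singleton]
  ring

/-- `(π,λ,τ)` is of backward top (resp. bottom) type iff `R⁻¹(π,λ,τ)` is
of forward top (resp. bottom) type, and the backward winner at `(π,λ,τ)` is the forward
winner at `R⁻¹(π,λ,τ)`.  Here `E = (π,λ,τ)` and `D = R⁻¹(E)`, i.e. `Step D E`. -/
theorem backward_type_iff_forward_type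
    (hm : 1 ≤ m) (D E : Datum A m) (hval : Valid D) (hstep : Step D E) :
    ((∑ α, E.tau α) < 0 ↔ D.lam (botSym D.p1) < D.lam (topSym D.p0)) ∧
    (0 < (∑ α, E.tau α) ↔ D.lam (topSym D.p0) < D.lam (botSym D.p1)) ∧
    bwWinner E = fwWinner D.p0 D.p1 D.lam := by
  obtain ⟨hlam, htheta, hirr⟩ := hval
  obtain ⟨htau, hcase⟩ := hstep
  have hk := htheta (m-1) (by omega)
  rcases hcase with ⟨hlt, hp0, hp1, hElam⟩ | ⟨hlt, hp1, hp0, hElam⟩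
  · -- forward top case
    have hw : fwWinner D.p0 D.p1 D.lam = topSym D.p0 := if_pos hlt
    have hl : fwLoser D.p0 D.p1 D.lam = botSym D.p1 := if_pos hlt
    have hsum : (∑ α, E.tau α) = (∑ α, D.tau α) - D.tau (botSym D.p1) := by
      rw [htau, hw, hl, sum_update_sub]
    have hneg : (∑ α, E.tau α) < 0 := by
      rw [hsum]
      simp only [botSym]
      rw [← sum_ite_le_pred hm D.p1 D.tau]
      exact hk.2
    refine ⟨⟨fun _ => hlt, fun _ => hneg⟩,
      ⟨fun h => absurd hneg (not_lt.mpr h.le), fun h => absurd hlt (not_lt.mpr h.le)⟩, ?_⟩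
    rw [bwWinner, if_pos hneg, hw, hp0]
  · -- forward bottom case
    have hw : fwWinner D.p0 D.p1 D.lam = botSym D.p1 := if_neg (not_lt.mpr hlt.le)
    have hl : fwLoser D.p0 D.p1 D.lam = topSym D.p0 := if_neg (not_lt.mpr hlt.le)
    have hsum : (∑ α, E.tau α) = (∑ α, D.tau α) - D.tau (topSym D.p0) := by
      rw [htau, hw, hl, sum_update_sub]
    have hpos : 0 < (∑ α, E.tau α) := by
      rw [hsum]
      simp only [topSym]
      rw [← sum_ite_le_pred hm D.p0 D.tau]
      exact hk.1
    refine ⟨⟨fun h => absurd hpos (not_lt.mpr h.le), fun h => absurd hlt (not_lt.mpr h.le)⟩,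
      ⟨fun _ => hlt, fun _ => hpos⟩, ?_⟩
    rw [bwWinner, if_neg (not_lt.mpr hpos.le), hw, hp1]

end RV
end
end

section
/- There exist translation surfaces (π,λ,τ) possessing a horizontal saddle connection whose backward Rauzy-Veech induction orbit R^{−n}(π,λ,τ) is defined for all n ∈ ℕ. -/
open scoped BigOperators
noncomputable section

namespace RV

variable {A : Type*} [Fintype A] [DecidableEq A] {m : ℕ}

/-- The vertex `a(π,λ,τ,k)` of the polygon (top broken line). -/
def vertA (D : Datum A m) (k : ℕ) : ℝ × ℝ :=
  (∑ α, if (D.p0 α : ℕ) < k then D.lam α else 0,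
   ∑ α, if (D.p0 α : ℕ) < k then D.tau α else 0)

/-- The vertex `b(π,λ,τ,k)` of the polygon (bottom broken line). -/
def vertB (D : Datum A m) (k : ℕ) : ℝ × ℝ :=
  (∑ α, if (D.p1 α : ℕ) < k then D.lam α else 0,
   ∑ α, if (D.p1 α : ℕ) < k then D.tau α else 0)

/-- The vertices of the polygon: these represent the singularity points `Σ`. -/
def vertices (D : Datum A m) : Set (ℝ × ℝ) :=
  {v | ∃ k ≤ m + 1, v = vertA D k ∨ v = vertB D k}

/-- The top side of the polygon corresponding to the symbol `α`. -/
def topSide (D : Datum A m) (α : A) : Set (ℝ × ℝ) :=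
  segment ℝ (vertA D (D.p0 α : ℕ)) (vertA D ((D.p0 α : ℕ) + 1))

/-- The bottom side of the polygon corresponding to the symbol `α`. -/
def botSide (D : Datum A m) (α : A) : Set (ℝ × ℝ) :=
  segment ℝ (vertB D (D.p1 α : ℕ)) (vertB D ((D.p1 α : ℕ) + 1))

/-- The translation identifying the bottom side of `α` with the top side of `α`. -/
def glueVec (D : Datum A m) (α : A) : ℝ × ℝ :=
  vertA D (D.p0 α : ℕ) - vertB D (D.p1 α : ℕ)

def topLine (D : Datum A m) : Set (ℝ × ℝ) := ⋃ α : A, topSide D α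
def botLine (D : Datum A m) : Set (ℝ × ℝ) := ⋃ α : A, botSide D α

def totalLen (D : Datum A m) : ℝ := ∑ α, D.lam α

/-- The top boundary broken line, as a function of the first coordinate. -/
def topF (D : Datum A m) (x : ℝ) : ℝ := sSup {y | (x, y) ∈ topLine D}

/-- The bottom boundary broken line, as a function of the first coordinate. -/
def botF (D : Datum A m) (x : ℝ) : ℝ := sInf {y | (x, y) ∈ botLine D}

/-- The polygonal region determined by `(π, λ, τ)`. -/
def Region (D : Datum A m) : Set (ℝ × ℝ) :=
  {p | 0 ≤ p.1 ∧ p.1 ≤ totalLen D ∧ botF D p.1 ≤ p.2 ∧ p.2 ≤ topF D p.1}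

/-- The side identifications of the polygon. -/
def Glued (D : Datum A m) (p q : ℝ × ℝ) : Prop :=
  ∃ α : A, (p ∈ botSide D α ∧ q = p + glueVec D α) ∨ (p ∈ topSide D α ∧ q = p - glueVec D α)

/-- A rightward horizontal trajectory on the surface: `n` horizontal segments inside the
polygon, consecutive ones linked by the side identifications, whose interiors avoid the
singularities. -/
def IsHorizTraj (D : Datum A m) (n : ℕ) (u w : ℕ → ℝ × ℝ) : Prop :=
  (∀ i < n, (u i).2 = (w i).2 ∧ (u i).1 < (w i).1 ∧ segment ℝ (u i) (w i) ⊆ Region D) ∧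
  (∀ i, i + 1 < n → Glued D (w i) (u (i + 1))) ∧
  (∀ i < n, ∀ q ∈ openSegment ℝ (u i) (w i), q ∉ vertices D) ∧
  (∀ i, i + 1 < n → w i ∉ vertices D)

/-- The rightward horizontal separatrix issued from `p` hits a singularity,
i.e. it is finite. -/
def ReachesSing (D : Datum A m) (p : ℝ × ℝ) : Prop :=
  ∃ n u w, 1 ≤ n ∧ IsHorizTraj D n u w ∧ u 0 = p ∧ w (n - 1) ∈ vertices D

/-- A horizontal saddle connection: a finite rightward horizontal trajectory joining two
singularity points. -/
def IsHorizSaddleConnection (D : Datum A m) (n : ℕ) (u w : ℕ → ℝ × ℝ) : Prop :=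
  1 ≤ n ∧ IsHorizTraj D n u w ∧ u 0 ∈ vertices D ∧ w (n - 1) ∈ vertices D

def HasHorizSaddleConnection (D : Datum A m) : Prop :=
  ∃ n u w, IsHorizSaddleConnection D n u w

/-- The set of points visited by the rightward horizontal trajectory issued from `p`. -/
def ReachSet (D : Datum A m) (p : ℝ × ℝ) : Set (ℝ × ℝ) :=
  {q | ∃ n u w, 1 ≤ n ∧ IsHorizTraj D n u w ∧ u 0 = p ∧ ∃ i < n, q ∈ segment ℝ (u i) (w i)}

/-- Minimality of the horizontal translation flow: every infinite rightward half-orbit is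
dense in the surface (density up to the side identifications). -/
def FlowMinimal (D : Datum A m) : Prop :=
  ∀ p ∈ Region D, ¬ ReachesSing D p →
    ∀ q ∈ Region D, ∀ ε : ℝ, 0 < ε →
      ∃ r ∈ ReachSet D p, ∃ q', Relation.EqvGen (Glued D) q q' ∧ dist r q' < ε

/-- The saddle connection `(n, u, w)` is a (horizontal) side of the polygon. -/
def IsSideConnection (D : Datum A m) (n : ℕ) (u w : ℕ → ℝ × ℝ) : Prop :=
  n = 1 ∧ ∃ β : A, D.tau β = 0 ∧
    (segment ℝ (u 0) (w 0) = topSide D β ∨ segment ℝ (u 0) (w 0) = botSide D β)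


/-! ### Auxiliary explicit construction -/

private def rt : ℝ := Real.sqrt 2
private lemma rt_nonneg : 0 ≤ rt := Real.sqrt_nonneg 2
private lemma rt_mul : rt * rt = 2 := Real.mul_self_sqrt (by norm_num)
private lemma rt_lb : (4:ℝ)/3 < rt := by nlinarith [rt_mul, rt_nonneg]
private lemma rt_ub : rt < 10/7 := by nlinarith [rt_mul, rt_nonneg]
private lemma mu_pos : (0:ℝ) < 3 - 2*rt := by nlinarith [rt_ub]

private def pI : Fin 3 ≃ Fin 3 := Equiv.refl _
private def pE : Fin 3 ≃ Fin 3 :=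
  ⟨![0,2,1], ![0,2,1], by intro x; fin_cases x <;> rfl, by intro x; fin_cases x <;> rfl⟩
private def pS : Fin 3 ≃ Fin 3 :=
  ⟨![1,2,0], ![2,0,1], by intro x; fin_cases x <;> rfl, by intro x; fin_cases x <;> rfl⟩
private def pR : Fin 3 ≃ Fin 3 :=
  ⟨![2,1,0], ![2,1,0], by intro x; fin_cases x <;> rfl, by intro x; fin_cases x <;> rfl⟩

private def P0v (n : ℕ) : Fin 3 ≃ Fin 3 := if n = 3 ∨ n = 5 then pE else pI

private def P1v (n : ℕ) : Fin 3 ≃ Fin 3 :=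
  if n = 0 ∨ n = 1 ∨ n = 7 ∨ n = 9 then pS else pR

private def Tv (n : ℕ) : Fin 3 → ℝ :=
  if n = 0 then ![rt, 2, -2]
  else if n = 1 then ![rt, 0, -2]
  else if n ≤ 3 then ![rt, 0, rt - 2]
  else if n ≤ 5 then ![2*rt - 2, 0, rt - 2]
  else if n ≤ 7 then ![3*rt - 4, 0, rt - 2]
  else ![3*rt - 4, 0, 4*rt - 6]

private def Wv (n : ℕ) : Fin 3 :=
  if n = 0 then 1 else if n = 1 then 2 else if n ≤ 5 then 0 else 2

private def Lv (n : ℕ) : Fin 3 :=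
  if n = 0 ∨ n = 3 ∨ n = 5 then 2 else if n = 1 ∨ n = 7 ∨ n = 9 then 0 else 1

private def idx (n : ℕ) : ℕ := if n < 2 then n else 2 + (n - 2) % 8

private def sc (n : ℕ) : ℝ := (3 - 2*rt) ^ ((n - 2) / 8)

private def Lam : ℕ → Fin 3 → ℝ
  | 0 => fun _ => 1
  | n+1 => Function.update (Lam n) (Wv (idx n)) (Lam n (Wv (idx n)) + Lam n (Lv (idx n)))

private def xseq : ℕ → Datum (Fin 3) 2 :=
  fun n => ⟨P0v (idx n), P1v (idx n), Lam n, sc n • Tv (idx n)⟩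

@[simp] private lemma xseq_p0 (n : ℕ) : (xseq n).p0 = P0v (idx n) := rfl
@[simp] private lemma xseq_p1 (n : ℕ) : (xseq n).p1 = P1v (idx n) := rfl
@[simp] private lemma xseq_lam (n : ℕ) : (xseq n).lam = Lam n := rfl
@[simp] private lemma xseq_tau (n : ℕ) : (xseq n).tau = sc n • Tv (idx n) := rfl

private lemma idx_le (n : ℕ) : idx n ≤ 9 := by unfold idx; split <;> omega

private lemma sc_pos (n : ℕ) : 0 < sc n := pow_pos mu_pos _

private lemma lam_pos (n : ℕ) : ∀ a, 0 < Lam n a := by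
  induction n with
  | zero => intro a; norm_num [Lam]
  | succ n ih =>
      intro a
      simp only [Lam]
      rcases eq_or_ne a (Wv (idx n)) with rfl | h
      · rw [Function.update_self]; exact add_pos (ih _) (ih _)
      · rw [Function.update_of_ne h]; exact ih a

private lemma theta_smul {p0 p1 : Fin 3 ≃ Fin 3} {c : ℝ} (hc : 0 < c) {t : Fin 3 → ℝ}
    (h : InTheta (m := 2) p0 p1 t) : InTheta (m := 2) p0 p1 (c • t) := by
  intro k hk
  obtain ⟨h1, h2⟩ := h k hk
  have key : ∀ (P : Fin 3 → Prop) (_ : DecidablePred P),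
      (∑ α, if P α then (c • t) α else 0) = c * ∑ α, if P α then t α else 0 := by
    intro P hP
    rw [Finset.mul_sum]
    refine Finset.sum_congr rfl fun a _ => ?_
    by_cases h : P a <;> simp [h]
  rw [key _ (fun _ => inferInstance), key _ (fun _ => inferInstance)]
  exact ⟨mul_pos hc h1, mul_neg_of_pos_of_neg hc h2⟩

set_option maxHeartbeats 1600000 in
private lemma base_theta : ∀ i ≤ 9, InTheta (m := 2) (P0v i) (P1v i) (Tv i) := by
  intro i hi
  interval_cases i <;> (intro k hk; interval_cases k) <;> refine ⟨?_, ?_⟩ <;>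
    · rw [Fin.sum_univ_three]
      norm_num [P0v, P1v, Tv, pI, pE, pS, pR, Fin.val_zero, Fin.val_one, Fin.val_two, Matrix.cons_val_two, Matrix.vecHead, Matrix.vecTail]
      all_goals nlinarith [rt_lb, rt_ub]

private lemma base_irr : ∀ i ≤ 9, Irreducible (m := 2) (P0v i) (P1v i) := by
  intro i hi
  interval_cases i <;> · intro k hk; interval_cases k <;> decide

private lemma valid_x (n : ℕ) : Valid (xseq n) :=
  ⟨fun a => lam_pos n a, theta_smul (sc_pos n) (base_theta _ (idx_le n)),
    base_irr _ (idx_le n)⟩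

private lemma update_back (f : Fin 3 → ℝ) (w l : Fin 3) (h : l ≠ w) :
    f = Function.update (Function.update f w (f w + f l)) w
        (Function.update f w (f w + f l) w - Function.update f w (f w + f l) l) := by
  funext a
  rcases eq_or_ne a w with rfl | ha
  · rw [Function.update_self, Function.update_self, Function.update_of_ne h]; ring
  · rw [Function.update_of_ne ha, Function.update_of_ne ha]

private lemma tau_step (c : ℝ) (f g : Fin 3 → ℝ) (w l : Fin 3)
    (h : g = Function.update f w (f w + f l)) :
    c • g = Function.update (c • f) w ((c • f) w + (c • f) l) := by
  subst h
  funext a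
  rcases eq_or_ne a w with rfl | ha
  · simp [mul_add]
  · simp [Function.update_of_ne ha]

private lemma step_top (D E : Datum (Fin 3) 2) (w l : Fin 3) (hne : l ≠ w)
    (hw : topSym D.p0 = w) (hl : botSym D.p1 = l)
    (hpos : ∀ a, 0 < E.lam a)
    (hlam : D.lam = Function.update E.lam w (E.lam w + E.lam l))
    (htau : D.tau = Function.update E.tau w (E.tau w + E.tau l))
    (hp0 : E.p0 = D.p0)
    (hp1 : ∀ α : Fin 3, (E.p1 α : ℕ) =
        if (D.p1 α : ℕ) ≤ (D.p1 w : ℕ) then (D.p1 α : ℕ)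
        else if α = l then (D.p1 w : ℕ) + 1 else (D.p1 α : ℕ) + 1) :
    Step D E := by
  have hlt : D.lam (botSym D.p1) < D.lam (topSym D.p0) := by
    rw [hw, hl, hlam, Function.update_self, Function.update_of_ne hne]
    linarith [hpos w]
  have hwin : fwWinner D.p0 D.p1 D.lam = w := by rw [fwWinner, if_pos hlt, hw]
  have hlos : fwLoser D.p0 D.p1 D.lam = l := by rw [fwLoser, if_pos hlt, hl]
  refine ⟨?_, Or.inl ⟨hlt, hp0, ?_, ?_⟩⟩
  · rw [hwin, hlos, htau]; exact update_back E.tau w l hne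
  · intro α; rw [hw, hl]; exact hp1 α
  · rw [hw, hl, hlam]; exact update_back E.lam w l hne

private lemma step_bot (D E : Datum (Fin 3) 2) (w l : Fin 3) (hne : l ≠ w)
    (hw : botSym D.p1 = w) (hl : topSym D.p0 = l)
    (hpos : ∀ a, 0 < E.lam a)
    (hlam : D.lam = Function.update E.lam w (E.lam w + E.lam l))
    (htau : D.tau = Function.update E.tau w (E.tau w + E.tau l))
    (hp1 : E.p1 = D.p1)
    (hp0 : ∀ α : Fin 3, (E.p0 α : ℕ) =
        if (D.p0 α : ℕ) ≤ (D.p0 w : ℕ) then (D.p0 α : ℕ)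
        else if α = l then (D.p0 w : ℕ) + 1 else (D.p0 α : ℕ) + 1) :
    Step D E := by
  have hlt : D.lam (topSym D.p0) < D.lam (botSym D.p1) := by
    rw [hw, hl, hlam, Function.update_self, Function.update_of_ne hne]
    linarith [hpos w]
  have hnlt : ¬ D.lam (botSym D.p1) < D.lam (topSym D.p0) := not_lt.mpr hlt.le
  have hwin : fwWinner D.p0 D.p1 D.lam = w := by rw [fwWinner, if_neg hnlt, hw]
  have hlos : fwLoser D.p0 D.p1 D.lam = l := by rw [fwLoser, if_neg hnlt, hl]
  refine ⟨?_, Or.inr ⟨hlt, hp1, ?_, ?_⟩⟩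
  · rw [hwin, hlos, htau]; exact update_back E.tau w l hne
  · intro α; rw [hw, hl]; exact hp0 α
  · rw [hw, hl, hlam]; exact update_back E.lam w l hne

private lemma TT0 : Tv 1 = Function.update (Tv 0) 1 (Tv 0 1 + Tv 0 2) := by
  funext a; fin_cases a <;> simp [Tv, Function.update] <;> norm_num
private lemma TT1 : Tv 2 = Function.update (Tv 1) 2 (Tv 1 2 + Tv 1 0) := by
  funext a; fin_cases a <;> simp [Tv, Function.update] <;> ring
private lemma TT2 : Tv 3 = Function.update (Tv 2) 0 (Tv 2 0 + Tv 2 1) := by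
  funext a; fin_cases a <;> simp [Tv, Function.update] <;> ring
private lemma TT3 : Tv 4 = Function.update (Tv 3) 0 (Tv 3 0 + Tv 3 2) := by
  funext a; fin_cases a <;> simp [Tv, Function.update] <;> ring
private lemma TT4 : Tv 5 = Function.update (Tv 4) 0 (Tv 4 0 + Tv 4 1) := by
  funext a; fin_cases a <;> simp [Tv, Function.update] <;> ring
private lemma TT5 : Tv 6 = Function.update (Tv 5) 0 (Tv 5 0 + Tv 5 2) := by
  funext a; fin_cases a <;> simp [Tv, Function.update] <;> ring
private lemma TT6 : Tv 7 = Function.update (Tv 6) 2 (Tv 6 2 + Tv 6 1) := by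
  funext a; fin_cases a <;> simp [Tv, Function.update] <;> ring
private lemma TT7 : Tv 8 = Function.update (Tv 7) 2 (Tv 7 2 + Tv 7 0) := by
  funext a; fin_cases a <;> simp [Tv, Function.update] <;> ring
private lemma TT8 : Tv 9 = Function.update (Tv 8) 2 (Tv 8 2 + Tv 8 1) := by
  funext a; fin_cases a <;> simp [Tv, Function.update] <;> ring
private lemma TT9 : (3 - 2*rt) • Tv 2 = Function.update (Tv 9) 2 (Tv 9 2 + Tv 9 0) := by
  funext a
  fin_cases a <;> simp [Tv, Function.update] <;>
    · first
      | linear_combination (-2 : ℝ) * rt_mul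
      | linear_combination (2 : ℝ) * rt_mul
      | ring

private lemma idx_succ (n : ℕ) : idx (n+1) = if idx n = 9 then 2 else idx n + 1 := by
  unfold idx; split_ifs <;> omega

private lemma sc_succ (n : ℕ) : sc (n+1) = if idx n = 9 then (3 - 2*rt) * sc n else sc n := by
  by_cases h : idx n = 9
  · rw [if_pos h]
    have h2 : (n + 1 - 2) / 8 = (n - 2) / 8 + 1 := by
      unfold idx at h; split at h <;> omega
    simp only [sc]
    rw [h2, pow_succ]; ring
  · rw [if_neg h]
    have h2 : (n + 1 - 2) / 8 = (n - 2) / 8 := by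
      unfold idx at h; split at h <;> omega
    simp only [sc]
    rw [h2]

private lemma step_x (n : ℕ) : Step (xseq (n+1)) (xseq n) := by
  have h9 := idx_le n
  have hi := idx_succ n
  have hsc := sc_succ n
  have hcase : idx n = 0 ∨ idx n = 1 ∨ idx n = 2 ∨ idx n = 3 ∨ idx n = 4 ∨ idx n = 5 ∨
      idx n = 6 ∨ idx n = 7 ∨ idx n = 8 ∨ idx n = 9 := by omega
  rcases hcase with h|h|h|h|h|h|h|h|h|h
  -- i = 0 : B, w = 1, l = 2, next = 1
  · rw [h, if_neg (by norm_num)] at hi hsc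
    norm_num at hi
    refine step_bot (xseq (n+1)) (xseq n) 1 2 (by decide) ?_ ?_ (fun a => lam_pos n a)
      ?_ ?_ ?_ ?_
    · rw [xseq_p1, hi]; decide
    · rw [xseq_p0, hi]; decide
    · simp only [xseq_lam, Lam, h]; rfl
    · simp only [xseq_tau, hi, hsc, h]
      exact tau_step (sc n) (Tv 0) (Tv 1) 1 2 TT0
    · simp only [xseq_p1, hi, h]; rfl
    · simp only [xseq_p0, hi, h]; decide
  -- i = 1 : T, w = 2, l = 0, next = 2
  · rw [h, if_neg (by norm_num)] at hi hsc
    norm_num at hi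
    refine step_top (xseq (n+1)) (xseq n) 2 0 (by decide) ?_ ?_ (fun a => lam_pos n a)
      ?_ ?_ ?_ ?_
    · rw [xseq_p0, hi]; decide
    · rw [xseq_p1, hi]; decide
    · simp only [xseq_lam, Lam, h]; rfl
    · simp only [xseq_tau, hi, hsc, h]
      exact tau_step (sc n) (Tv 1) (Tv 2) 2 0 TT1
    · simp only [xseq_p0, hi, h]; rfl
    · simp only [xseq_p1, hi, h]; decide
  -- i = 2 : B, w = 0, l = 1, next = 3
  · rw [h, if_neg (by norm_num)] at hi hsc
    norm_num at hi
    refine step_bot (xseq (n+1)) (xseq n) 0 1 (by decide) ?_ ?_ (fun a => lam_pos n a)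
      ?_ ?_ ?_ ?_
    · rw [xseq_p1, hi]; decide
    · rw [xseq_p0, hi]; decide
    · simp only [xseq_lam, Lam, h]; rfl
    · simp only [xseq_tau, hi, hsc, h]
      exact tau_step (sc n) (Tv 2) (Tv 3) 0 1 TT2
    · simp only [xseq_p1, hi, h]; rfl
    · simp only [xseq_p0, hi, h]; decide
  -- i = 3 : B, w = 0, l = 2, next = 4
  · rw [h, if_neg (by norm_num)] at hi hsc
    norm_num at hi
    refine step_bot (xseq (n+1)) (xseq n) 0 2 (by decide) ?_ ?_ (fun a => lam_pos n a)
      ?_ ?_ ?_ ?_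
    · rw [xseq_p1, hi]; decide
    · rw [xseq_p0, hi]; decide
    · simp only [xseq_lam, Lam, h]; rfl
    · simp only [xseq_tau, hi, hsc, h]
      exact tau_step (sc n) (Tv 3) (Tv 4) 0 2 TT3
    · simp only [xseq_p1, hi, h]; rfl
    · simp only [xseq_p0, hi, h]; decide
  -- i = 4 : B, w = 0, l = 1, next = 5
  · rw [h, if_neg (by norm_num)] at hi hsc
    norm_num at hi
    refine step_bot (xseq (n+1)) (xseq n) 0 1 (by decide) ?_ ?_ (fun a => lam_pos n a)
      ?_ ?_ ?_ ?_
    · rw [xseq_p1, hi]; decide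
    · rw [xseq_p0, hi]; decide
    · simp only [xseq_lam, Lam, h]; rfl
    · simp only [xseq_tau, hi, hsc, h]
      exact tau_step (sc n) (Tv 4) (Tv 5) 0 1 TT4
    · simp only [xseq_p1, hi, h]; rfl
    · simp only [xseq_p0, hi, h]; decide
  -- i = 5 : B, w = 0, l = 2, next = 6
  · rw [h, if_neg (by norm_num)] at hi hsc
    norm_num at hi
    refine step_bot (xseq (n+1)) (xseq n) 0 2 (by decide) ?_ ?_ (fun a => lam_pos n a)
      ?_ ?_ ?_ ?_
    · rw [xseq_p1, hi]; decide
    · rw [xseq_p0, hi]; decide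
    · simp only [xseq_lam, Lam, h]; rfl
    · simp only [xseq_tau, hi, hsc, h]
      exact tau_step (sc n) (Tv 5) (Tv 6) 0 2 TT5
    · simp only [xseq_p1, hi, h]; rfl
    · simp only [xseq_p0, hi, h]; decide
  -- i = 6 : T, w = 2, l = 1, next = 7
  · rw [h, if_neg (by norm_num)] at hi hsc
    norm_num at hi
    refine step_top (xseq (n+1)) (xseq n) 2 1 (by decide) ?_ ?_ (fun a => lam_pos n a)
      ?_ ?_ ?_ ?_
    · rw [xseq_p0, hi]; decide
    · rw [xseq_p1, hi]; decide
    · simp only [xseq_lam, Lam, h]; rfl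
    · simp only [xseq_tau, hi, hsc, h]
      exact tau_step (sc n) (Tv 6) (Tv 7) 2 1 TT6
    · simp only [xseq_p0, hi, h]; rfl
    · simp only [xseq_p1, hi, h]; decide
  -- i = 7 : T, w = 2, l = 0, next = 8
  · rw [h, if_neg (by norm_num)] at hi hsc
    norm_num at hi
    refine step_top (xseq (n+1)) (xseq n) 2 0 (by decide) ?_ ?_ (fun a => lam_pos n a)
      ?_ ?_ ?_ ?_
    · rw [xseq_p0, hi]; decide
    · rw [xseq_p1, hi]; decide
    · simp only [xseq_lam, Lam, h]; rfl
    · simp only [xseq_tau, hi, hsc, h]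
      exact tau_step (sc n) (Tv 7) (Tv 8) 2 0 TT7
    · simp only [xseq_p0, hi, h]; rfl
    · simp only [xseq_p1, hi, h]; decide
  -- i = 8 : T, w = 2, l = 1, next = 9
  · rw [h, if_neg (by norm_num)] at hi hsc
    norm_num at hi
    refine step_top (xseq (n+1)) (xseq n) 2 1 (by decide) ?_ ?_ (fun a => lam_pos n a)
      ?_ ?_ ?_ ?_
    · rw [xseq_p0, hi]; decide
    · rw [xseq_p1, hi]; decide
    · simp only [xseq_lam, Lam, h]; rfl
    · simp only [xseq_tau, hi, hsc, h]
      exact tau_step (sc n) (Tv 8) (Tv 9) 2 1 TT8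
    · simp only [xseq_p0, hi, h]; rfl
    · simp only [xseq_p1, hi, h]; decide
  -- i = 9 : T, w = 2, l = 0, next = 2
  · rw [h, if_pos rfl] at hi hsc
    refine step_top (xseq (n+1)) (xseq n) 2 0 (by decide) ?_ ?_ (fun a => lam_pos n a)
      ?_ ?_ ?_ ?_
    · rw [xseq_p0, hi]; decide
    · rw [xseq_p1, hi]; decide
    · simp only [xseq_lam, Lam, h]; rfl
    · simp only [xseq_tau, hi, hsc, h]
      rw [mul_comm, mul_smul]
      exact tau_step (sc n) (Tv 9) ((3 - 2*rt) • Tv 2) 2 0 TT9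
    · simp only [xseq_p0, hi, h]; rfl
    · simp only [xseq_p1, hi, h]; decide

/-! ### The saddle connection of `xseq 0` -/

private lemma x0_tau : (xseq 0).tau = Tv 0 := by
  show sc 0 • Tv (idx 0) = Tv 0
  have h1 : sc 0 = 1 := by
    show (3 - 2*rt) ^ ((0 - 2) / 8) = 1
    norm_num
  have h2 : idx 0 = 0 := rfl
  rw [h1, h2, one_smul]

private lemma cp0 : ((xseq 0).p0 0 : ℕ) = 0 ∧ ((xseq 0).p0 1 : ℕ) = 1 ∧
    ((xseq 0).p0 2 : ℕ) = 2 := ⟨rfl, rfl, rfl⟩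
private lemma cp1 : ((xseq 0).p1 0 : ℕ) = 1 ∧ ((xseq 0).p1 1 : ℕ) = 2 ∧
    ((xseq 0).p1 2 : ℕ) = 0 := ⟨rfl, rfl, rfl⟩
private lemma dp0 : ((P0v (idx 0)) 0 : ℕ) = 0 ∧ ((P0v (idx 0)) 1 : ℕ) = 1 ∧
    ((P0v (idx 0)) 2 : ℕ) = 2 := ⟨rfl, rfl, rfl⟩
private lemma dp1 : ((P1v (idx 0)) 0 : ℕ) = 1 ∧ ((P1v (idx 0)) 1 : ℕ) = 2 ∧
    ((P1v (idx 0)) 2 : ℕ) = 0 := ⟨rfl, rfl, rfl⟩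
private lemma clam : ∀ a, (xseq 0).lam a = 1 := fun _ => rfl
private lemma ct0 : Tv 0 0 = rt := rfl
private lemma ct1 : Tv 0 1 = 2 := rfl
private lemma ct2 : Tv 0 2 = -2 := rfl

private lemma hA0 : vertA (xseq 0) 0 = (0, 0) := by
  unfold vertA
  rw [x0_tau, Prod.mk.injEq]
  constructor <;>
    · rw [Fin.sum_univ_three]
      norm_num [cp0.1, cp0.2.1, cp0.2.2, dp0.1, dp0.2.1, dp0.2.2, clam, ct0, ct1, ct2]
      all_goals ring

private lemma hA1 : vertA (xseq 0) 1 = (1, rt) := by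
  unfold vertA
  rw [x0_tau, Prod.mk.injEq]
  constructor <;>
    · rw [Fin.sum_univ_three]
      norm_num [cp0.1, cp0.2.1, cp0.2.2, dp0.1, dp0.2.1, dp0.2.2, clam, ct0, ct1, ct2]
      all_goals ring

private lemma hA2 : vertA (xseq 0) 2 = (2, rt + 2) := by
  unfold vertA
  rw [x0_tau, Prod.mk.injEq]
  constructor <;>
    · rw [Fin.sum_univ_three]
      norm_num [cp0.1, cp0.2.1, cp0.2.2, dp0.1, dp0.2.1, dp0.2.2, clam, ct0, ct1, ct2]
      all_goals ring

private lemma hA3 : vertA (xseq 0) 3 = (3, rt) := by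
  unfold vertA
  rw [x0_tau, Prod.mk.injEq]
  constructor <;>
    · rw [Fin.sum_univ_three]
      norm_num [cp0.1, cp0.2.1, cp0.2.2, dp0.1, dp0.2.1, dp0.2.2, clam, ct0, ct1, ct2]
      all_goals ring

private lemma hB0 : vertB (xseq 0) 0 = (0, 0) := by
  unfold vertB
  rw [x0_tau, Prod.mk.injEq]
  constructor <;>
    · rw [Fin.sum_univ_three]
      norm_num [cp1.1, cp1.2.1, cp1.2.2, dp1.1, dp1.2.1, dp1.2.2, clam, ct0, ct1, ct2]
      all_goals ring

private lemma hB1 : vertB (xseq 0) 1 = (1, -2) := by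
  unfold vertB
  rw [x0_tau, Prod.mk.injEq]
  constructor <;>
    · rw [Fin.sum_univ_three]
      norm_num [cp1.1, cp1.2.1, cp1.2.2, dp1.1, dp1.2.1, dp1.2.2, clam, ct0, ct1, ct2]
      all_goals ring

private lemma hB2 : vertB (xseq 0) 2 = (2, rt - 2) := by
  unfold vertB
  rw [x0_tau, Prod.mk.injEq]
  constructor <;>
    · rw [Fin.sum_univ_three]
      norm_num [cp1.1, cp1.2.1, cp1.2.2, dp1.1, dp1.2.1, dp1.2.2, clam, ct0, ct1, ct2]
      all_goals ring

private lemma hB3 : vertB (xseq 0) 3 = (3, rt) := by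
  unfold vertB
  rw [x0_tau, Prod.mk.injEq]
  constructor <;>
    · rw [Fin.sum_univ_three]
      norm_num [cp1.1, cp1.2.1, cp1.2.2, dp1.1, dp1.2.1, dp1.2.2, clam, ct0, ct1, ct2]
      all_goals ring

private lemma htot : totalLen (xseq 0) = 3 := by
  unfold totalLen
  rw [Fin.sum_univ_three]
  norm_num [clam]

private lemma hts0 : topSide (xseq 0) 0 = segment ℝ ((0:ℝ),(0:ℝ)) ((1:ℝ), rt) := by
  unfold topSide
  rw [cp0.1]
  norm_num [hA0, hA1]

private lemma hts1 : topSide (xseq 0) 1 = segment ℝ ((1:ℝ), rt) ((2:ℝ), rt + 2) := by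
  unfold topSide
  rw [cp0.2.1]
  norm_num [hA1, hA2]

private lemma hts2 : topSide (xseq 0) 2 = segment ℝ ((2:ℝ), rt + 2) ((3:ℝ), rt) := by
  unfold topSide
  rw [cp0.2.2]
  norm_num [hA2, hA3]

private lemma hbs0 : botSide (xseq 0) 0 = segment ℝ ((1:ℝ), (-2:ℝ)) ((2:ℝ), rt - 2) := by
  unfold botSide
  rw [cp1.1]
  norm_num [hB1, hB2]

private lemma hbs1 : botSide (xseq 0) 1 = segment ℝ ((2:ℝ), rt - 2) ((3:ℝ), rt) := by
  unfold botSide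
  rw [cp1.2.1]
  norm_num [hB2, hB3]

private lemma hbs2 : botSide (xseq 0) 2 = segment ℝ ((0:ℝ), (0:ℝ)) ((1:ℝ), (-2:ℝ)) := by
  unfold botSide
  rw [cp1.2.2]
  norm_num [hB0, hB1]

private lemma seg_mem (x1 y1 x2 y2 a b : ℝ) (ha : 0 ≤ a) (hb : 0 ≤ b) (hab : a + b = 1) :
    (a * x1 + b * x2, a * y1 + b * y2) ∈ segment ℝ ((x1, y1) : ℝ × ℝ) (x2, y2) :=
  ⟨a, b, ha, hb, hab, rfl⟩

private lemma seg_extract {p : ℝ × ℝ} (h : p ∈ segment ℝ (((1:ℝ), rt) : ℝ × ℝ) ((3:ℝ), rt)) :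
    1 ≤ p.1 ∧ p.1 ≤ 3 ∧ p.2 = rt := by
  obtain ⟨a, b, ha, hb, hab, heq⟩ := h
  have h1 : a * 1 + b * 3 = p.1 := congrArg Prod.fst heq
  have h2 : a * rt + b * rt = p.2 := congrArg Prod.snd heq
  refine ⟨by nlinarith, by nlinarith, ?_⟩
  rw [← h2]; linear_combination rt * hab

private lemma seg_sub_region :
    segment ℝ (((1:ℝ), rt) : ℝ × ℝ) ((3:ℝ), rt) ⊆ Region (xseq 0) := by
  intro q hq
  obtain ⟨hx1, hx3, hy⟩ := seg_extract hq
  refine ⟨by linarith, by rw [htot]; linarith, ?_, ?_⟩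
  · -- botF ≤ q.2
    rw [hy]
    have hbdd : BddBelow {y | (q.1, y) ∈ botLine (xseq 0)} := by
      refine ⟨-2, fun y hy' => ?_⟩
      obtain ⟨α, hα⟩ := Set.mem_iUnion.1 hy'
      fin_cases α
      · replace hα : (q.1, y) ∈ segment ℝ ((1:ℝ), (-2:ℝ)) ((2:ℝ), rt - 2) := by
          rw [← hbs0]; exact hα
        obtain ⟨a, b, ha, hb, hab, heq⟩ := hα
        have h2 : a * (-2) + b * (rt - 2) = y := congrArg Prod.snd heq
        nlinarith [mul_nonneg hb rt_nonneg]
      · replace hα : (q.1, y) ∈ segment ℝ ((2:ℝ), rt - 2) ((3:ℝ), rt) := by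
          rw [← hbs1]; exact hα
        obtain ⟨a, b, ha, hb, hab, heq⟩ := hα
        have h2 : a * (rt - 2) + b * rt = y := congrArg Prod.snd heq
        nlinarith [mul_nonneg hb rt_nonneg, mul_nonneg ha rt_nonneg]
      · replace hα : (q.1, y) ∈ segment ℝ ((0:ℝ), (0:ℝ)) ((1:ℝ), (-2:ℝ)) := by
          rw [← hbs2]; exact hα
        obtain ⟨a, b, ha, hb, hab, heq⟩ := hα
        have h2 : a * 0 + b * (-2) = y := congrArg Prod.snd heq
        nlinarith
    have hel : ∃ y₀, (q.1, y₀) ∈ botLine (xseq 0) ∧ y₀ ≤ rt := by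
      rcases le_or_gt q.1 2 with h2 | h2
      · refine ⟨(q.1 - 1) * rt - 2, Set.mem_iUnion.2 ⟨0, ?_⟩, by nlinarith [rt_lb, rt_ub]⟩
        rw [hbs0]
        have hm := seg_mem 1 (-2) 2 (rt - 2) (2 - q.1) (q.1 - 1)
          (by linarith) (by linarith) (by ring)
        have he : ((2 - q.1) * 1 + (q.1 - 1) * 2, (2 - q.1) * (-2) + (q.1 - 1) * (rt - 2)) =
            (q.1, (q.1 - 1) * rt - 2) := by
          rw [Prod.mk.injEq]; exact ⟨by ring, by ring⟩
        rw [he] at hm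
        exact hm
      · refine ⟨2 * q.1 - 6 + rt, Set.mem_iUnion.2 ⟨1, ?_⟩, by linarith⟩
        rw [hbs1]
        have hm := seg_mem 2 (rt - 2) 3 rt (3 - q.1) (q.1 - 2)
          (by linarith) (by linarith) (by ring)
        have he : ((3 - q.1) * 2 + (q.1 - 2) * 3, (3 - q.1) * (rt - 2) + (q.1 - 2) * rt) =
            (q.1, 2 * q.1 - 6 + rt) := by
          rw [Prod.mk.injEq]; exact ⟨by ring, by ring⟩
        rw [he] at hm
        exact hm
    obtain ⟨y₀, hmem, hle⟩ := hel
    exact le_trans (csInf_le hbdd hmem) hle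
  · -- q.2 ≤ topF
    rw [hy]
    have hbdd : BddAbove {y | (q.1, y) ∈ topLine (xseq 0)} := by
      refine ⟨rt + 2, fun y hy' => ?_⟩
      obtain ⟨α, hα⟩ := Set.mem_iUnion.1 hy'
      fin_cases α
      · replace hα : (q.1, y) ∈ segment ℝ ((0:ℝ), (0:ℝ)) ((1:ℝ), rt) := by
          rw [← hts0]; exact hα
        obtain ⟨a, b, ha, hb, hab, heq⟩ := hα
        have h2 : a * 0 + b * rt = y := congrArg Prod.snd heq
        nlinarith [mul_nonneg ha rt_nonneg, rt_lb]
      · replace hα : (q.1, y) ∈ segment ℝ ((1:ℝ), rt) ((2:ℝ), rt + 2) := by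
          rw [← hts1]; exact hα
        obtain ⟨a, b, ha, hb, hab, heq⟩ := hα
        have h2 : a * rt + b * (rt + 2) = y := congrArg Prod.snd heq
        have hrt : a * rt + b * rt = rt := by linear_combination rt * hab
        nlinarith
      · replace hα : (q.1, y) ∈ segment ℝ ((2:ℝ), rt + 2) ((3:ℝ), rt) := by
          rw [← hts2]; exact hα
        obtain ⟨a, b, ha, hb, hab, heq⟩ := hα
        have h2 : a * (rt + 2) + b * rt = y := congrArg Prod.snd heq
        have hrt : a * rt + b * rt = rt := by linear_combination rt * hab
        nlinarith
    have hel : ∃ y₀, (q.1, y₀) ∈ topLine (xseq 0) ∧ rt ≤ y₀ := by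
      rcases le_or_gt q.1 2 with h2 | h2
      · refine ⟨rt + 2 * (q.1 - 1), Set.mem_iUnion.2 ⟨1, ?_⟩, by linarith⟩
        rw [hts1]
        have hm := seg_mem 1 rt 2 (rt + 2) (2 - q.1) (q.1 - 1)
          (by linarith) (by linarith) (by ring)
        have he : ((2 - q.1) * 1 + (q.1 - 1) * 2, (2 - q.1) * rt + (q.1 - 1) * (rt + 2)) =
            (q.1, rt + 2 * (q.1 - 1)) := by
          rw [Prod.mk.injEq]; exact ⟨by ring, by ring⟩
        rw [he] at hm
        exact hm
      · refine ⟨rt + 6 - 2 * q.1, Set.mem_iUnion.2 ⟨2, ?_⟩, by linarith⟩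
        rw [hts2]
        have hm := seg_mem 2 (rt + 2) 3 rt (3 - q.1) (q.1 - 2)
          (by linarith) (by linarith) (by ring)
        have he : ((3 - q.1) * 2 + (q.1 - 2) * 3, (3 - q.1) * (rt + 2) + (q.1 - 2) * rt) =
            (q.1, rt + 6 - 2 * q.1) := by
          rw [Prod.mk.injEq]; exact ⟨by ring, by ring⟩
        rw [he] at hm
        exact hm
    obtain ⟨y₀, hmem, hge⟩ := hel
    exact le_trans hge (le_csSup hbdd hmem)

private lemma no_vert :
    ∀ q ∈ openSegment ℝ (((1:ℝ), rt) : ℝ × ℝ) ((3:ℝ), rt), q ∉ vertices (xseq 0) := by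
  intro q hq hv
  obtain ⟨a, b, ha, hb, hab, heq⟩ := hq
  have h1 : a * 1 + b * 3 = q.1 := congrArg Prod.fst heq
  have h2 : a * rt + b * rt = q.2 := congrArg Prod.snd heq
  have hy : q.2 = rt := by rw [← h2]; linear_combination rt * hab
  have hq1 : 1 < q.1 := by nlinarith
  have hq3 : q.1 < 3 := by nlinarith
  obtain ⟨k, hk, hor⟩ := hv
  interval_cases k
  · rcases hor with h | h
    · have h5 : q.2 = 0 := by rw [h, hA0]
      rw [hy] at h5
      nlinarith [rt_lb]
    · have h5 : q.2 = 0 := by rw [h, hB0]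
      rw [hy] at h5
      nlinarith [rt_lb]
  · rcases hor with h | h
    · have h5 : q.1 = 1 := by rw [h, hA1]
      linarith
    · have h5 : q.2 = -2 := by rw [h, hB1]
      rw [hy] at h5
      nlinarith [rt_lb]
  · rcases hor with h | h
    · have h5 : q.2 = rt + 2 := by rw [h, hA2]
      rw [hy] at h5
      linarith
    · have h5 : q.2 = rt - 2 := by rw [h, hB2]
      rw [hy] at h5
      linarith
  · rcases hor with h | h
    · have h5 : q.1 = 3 := by rw [h, hA3]
      linarith
    · have h5 : q.1 = 3 := by rw [h, hB3]
      linarith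

private lemma has_conn : HasHorizSaddleConnection (xseq 0) := by
  refine ⟨1, fun _ => ((1:ℝ), rt), fun _ => ((3:ℝ), rt), le_refl 1, ?_, ?_, ?_⟩
  · refine ⟨?_, ?_, ?_, ?_⟩
    · intro i _
      exact ⟨rfl, by norm_num, seg_sub_region⟩
    · intro i hi
      exact absurd hi (by omega)
    · intro i _ q hq
      exact no_vert q hq
    · intro i hi
      exact absurd hi (by omega)
  · exact ⟨1, by norm_num, Or.inl hA1.symm⟩
  · exact ⟨3, by norm_num, Or.inl hA3.symm⟩

/-- there exist translation surfaces with a horizontal saddle connection whose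
backward Rauzy–Veech induction orbit is defined indefinitely. -/
theorem exists_surface_with_connection_and_infinite_backward_orbit :
    ∃ (m : ℕ) (D : Datum (Fin (m+1)) m), Valid D ∧
      HasHorizSaddleConnection D ∧
      ∃ x : ℕ → Datum (Fin (m+1)) m, x 0 = D ∧ IsBackwardOrbit x := by
  exact ⟨2, xseq 0, valid_x 0, has_conn, xseq, rfl, fun n => ⟨step_x n, valid_x n⟩⟩

end RV
end
end

section
/- If β = π₀⁻¹(d), τ ∈ Θ^𝒜(π) and τ_β = 0, then Σ_{α∈𝒜} τ_α ≠ 0. Symmetrically, if β = π₁⁻¹(d), τ ∈ Θ^𝒜(π) and τ_β = 0, then Σ_{α∈𝒜} τ_α ≠ 0. -/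
open scoped BigOperators
noncomputable section

namespace RV

variable {A : Type*} [Fintype A] [DecidableEq A] {m : ℕ}

/-- if `β = π₀⁻¹(d)` (resp. `β = π₁⁻¹(d)`), `τ ∈ Θ^𝒜(π)` and
`τ_β = 0`, then `∑_α τ_α ≠ 0`. -/
theorem sum_tau_ne_zero_of_last_tau_eq_zero
    (hm : 1 ≤ m) (p0 p1 : A ≃ Fin (m+1)) (hirr : Irreducible p0 p1)
    (tau : A → ℝ) (hΘ : InTheta p0 p1 tau) :
    (tau (topSym p0) = 0 → (∑ α, tau α) ≠ 0) ∧
    (tau (botSym p1) = 0 → (∑ α, tau α) ≠ 0) := by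
  have key : ∀ (p : A ≃ Fin (m+1)), tau (p.symm (Fin.last m)) = 0 →
      (∑ α, if (p α : ℕ) ≤ m - 1 then tau α else 0) = ∑ α, tau α := by
    intro p h0
    refine Finset.sum_congr rfl fun α _ => ?_
    split_ifs with h
    · rfl
    · have hle : (p α : ℕ) ≤ m := Nat.lt_succ_iff.mp (p α).isLt
      have : (p α : ℕ) = m := by omega
      have hα : α = p.symm (Fin.last m) := by
        apply p.injective; simp [Fin.ext_iff, this, Fin.last]
      rw [hα, h0]
  have hk : m - 1 < m := by omega
  obtain ⟨h0, h1⟩ := hΘ (m-1) hk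
  constructor
  · intro htop hs
    rw [key p0 htop, hs] at h0
    exact lt_irrefl 0 h0
  · intro hbot hs
    rw [key p1 hbot, hs] at h1
    exact lt_irrefl 0 h1

end RV
end
end

section
/- Let d = 4 and π be the permutation pair with π₁∘π₀⁻¹(i) = 5−i for i = 1,2,3,4, and suppose τ ∈ Θ^𝒜(π) satisfies τ_{π₀⁻¹(2)} = −τ_{π₀⁻¹(3)} > 0. Then along the entire backward Rauzy-Veech induction orbit of (π,λ,τ), neither π₀⁻¹(2) nor π₀⁻¹(3) is ever a backward winner; in particular after three backward steps the permutation returns to π. -/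
open scoped BigOperators
noncomputable section

namespace RV

variable {A : Type*} [Fintype A] [DecidableEq A] {m : ℕ}

set_option maxRecDepth 40000 in
lemma dtop1 : ∀ f : Fin 4 → Fin 4, Function.Injective f →
    (∀ i, (((![3,2,1,0] : Fin 4 → Fin 4) i : Fin 4) : ℕ) =
      if (f i : ℕ) ≤ (f 3 : ℕ) then (f i : ℕ)
      else if f i = 3 then (f 3 : ℕ) + 1 else (f i : ℕ) + 1) →
    ∀ i, f i = (![2,1,3,0] : Fin 4 → Fin 4) i := by decide

set_option maxRecDepth 40000 in
lemma dtop2 : ∀ f : Fin 4 → Fin 4, Function.Injective f →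
    (∀ i, (((![2,1,3,0] : Fin 4 → Fin 4) i : Fin 4) : ℕ) =
      if (f i : ℕ) ≤ (f 3 : ℕ) then (f i : ℕ)
      else if f i = 3 then (f 3 : ℕ) + 1 else (f i : ℕ) + 1) →
    ∀ i, f i = (![1,3,2,0] : Fin 4 → Fin 4) i := by decide

set_option maxRecDepth 40000 in
lemma dtop3 : ∀ f : Fin 4 → Fin 4, Function.Injective f →
    (∀ i, (((![1,3,2,0] : Fin 4 → Fin 4) i : Fin 4) : ℕ) =
      if (f i : ℕ) ≤ (f 3 : ℕ) then (f i : ℕ)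
      else if f i = 3 then (f 3 : ℕ) + 1 else (f i : ℕ) + 1) →
    ∀ i, f i = (![3,2,1,0] : Fin 4 → Fin 4) i := by decide

set_option maxRecDepth 40000 in
lemma dbot1 : ∀ f : Fin 4 → Fin 4, Function.Injective f →
    (∀ i, (((![0,1,2,3] : Fin 4 → Fin 4) i : Fin 4) : ℕ) =
      if (f i : ℕ) ≤ (f 0 : ℕ) then (f i : ℕ)
      else if f i = 3 then (f 0 : ℕ) + 1 else (f i : ℕ) + 1) →
    ∀ i, f i = (![0,3,1,2] : Fin 4 → Fin 4) i := by decide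

set_option maxRecDepth 40000 in
lemma dbot2 : ∀ f : Fin 4 → Fin 4, Function.Injective f →
    (∀ i, (((![0,3,1,2] : Fin 4 → Fin 4) i : Fin 4) : ℕ) =
      if (f i : ℕ) ≤ (f 0 : ℕ) then (f i : ℕ)
      else if f i = 3 then (f 0 : ℕ) + 1 else (f i : ℕ) + 1) →
    ∀ i, f i = (![0,2,3,1] : Fin 4 → Fin 4) i := by decide

set_option maxRecDepth 40000 in
lemma dbot3 : ∀ f : Fin 4 → Fin 4, Function.Injective f →
    (∀ i, (((![0,2,3,1] : Fin 4 → Fin 4) i : Fin 4) : ℕ) =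
      if (f i : ℕ) ≤ (f 0 : ℕ) then (f i : ℕ)
      else if f i = 3 then (f 0 : ℕ) + 1 else (f i : ℕ) + 1) →
    ∀ i, f i = (![0,1,2,3] : Fin 4 → Fin 4) i := by decide

lemma sum_update_eq {A : Type*} [Fintype A] [DecidableEq A] (τ : A → ℝ) (w : A) (v : ℝ) :
    (∑ α, Function.update τ w v α) = (∑ α, τ α) - τ w + v := by
  have key : ∀ α, Function.update τ w v α = τ α + (if α = w then v - τ w else 0) := by
    intro α; by_cases h : α = w
    · subst h; simp
    · simp [Function.update_of_ne h, h]
  rw [Finset.sum_congr rfl (fun α _ => key α), Finset.sum_add_distrib,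
    Finset.sum_ite_eq' Finset.univ w (fun _ => v - τ w)]
  simp; ring

lemma theta_sum {A : Type*} [Fintype A] [DecidableEq A] (q : A ≃ Fin 4) (τ : A → ℝ) :
    (∑ α, if (q α : ℕ) ≤ 2 then τ α else 0) = (∑ α, τ α) - τ (q.symm (Fin.last 3)) := by
  have key : ∀ α, (if (q α : ℕ) ≤ 2 then τ α else 0)
      = τ α - (if α = q.symm (Fin.last 3) then τ α else 0) := by
    intro α; by_cases h : α = q.symm (Fin.last 3)
    · subst h; simp [Equiv.apply_symm_apply, Fin.val_last]
    · have h4 : q α ≠ Fin.last 3 := by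
        intro hq; exact h (by rw [← hq, Equiv.symm_apply_apply])
      have h6 : (q α : ℕ) ≠ 3 := by
        intro hv; exact h4 (Fin.ext (by rw [hv]; rfl))
      have h7 := (q α).isLt
      rw [if_pos (by omega), if_neg h, sub_zero]
  rw [Finset.sum_congr rfl (fun α _ => key α), Finset.sum_sub_distrib,
    Finset.sum_ite_eq' Finset.univ _ τ]
  simp

lemma top_step {A : Type*} [Fintype A] [DecidableEq A]
    {D E : Datum A 3} (p : A ≃ Fin 4) (hst : Step D E) (hD : Valid D)
    (hneg : (∑ α, E.tau α) < 0) (hE0 : E.p0 = p)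
    (g v : Fin 4 → Fin 4) (hE1 : ∀ i, E.p1 (p.symm i) = g i)
    (hdec : ∀ f : Fin 4 → Fin 4, Function.Injective f →
      (∀ i, ((g i : Fin 4) : ℕ) = if (f i : ℕ) ≤ (f 3 : ℕ) then (f i : ℕ)
        else if f i = 3 then (f 3 : ℕ) + 1 else (f i : ℕ) + 1) →
      ∀ i, f i = v i)
    (j : Fin 4) (hj : v j = 3) (hj3 : j ≠ 3) :
    D.p0 = p ∧ (∀ i, D.p1 (p.symm i) = v i) ∧
    (∀ α, α ≠ p.symm 3 → D.tau α = E.tau α) ∧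
    (∑ α, D.tau α) = (∑ α, E.tau α) + E.tau (p.symm j) := by
  obtain ⟨htup, hor⟩ := hst
  rcases hor with ⟨hlt, hp0, hform, _⟩ | ⟨hlt, hp1, hform, _⟩
  · -- top-type step
    have hp : D.p0 = p := by rw [← hp0]; exact hE0
    have htopD : topSym D.p0 = p.symm 3 := by
      rw [show topSym D.p0 = D.p0.symm (3 : Fin 4) from rfl, hp]
    have hv : ∀ i, D.p1 (p.symm i) = v i := by
      refine hdec (fun i => D.p1 (p.symm i)) (D.p1.injective.comp p.symm.injective) ?_
      intro i
      have hcond : (p.symm i = botSym D.p1) ↔ (D.p1 (p.symm i) = (3 : Fin 4)) := by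
        rw [show botSym D.p1 = D.p1.symm (3 : Fin 4) from rfl]
        exact Equiv.eq_symm_apply _
      have h := hform (p.symm i)
      rw [htopD] at h
      simp only [hcond] at h
      rw [hE1 i] at h
      exact h
    have hbot : botSym D.p1 = p.symm j := by
      rw [show botSym D.p1 = D.p1.symm (3 : Fin 4) from rfl, Equiv.symm_apply_eq]
      exact ((hv j).trans hj).symm
    have hw : fwWinner D.p0 D.p1 D.lam = topSym D.p0 := if_pos hlt
    have hl : fwLoser D.p0 D.p1 D.lam = botSym D.p1 := if_pos hlt
    rw [hw, hl, htopD, hbot] at htup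
    have hne : p.symm j ≠ p.symm 3 := fun hh => hj3 (p.symm.injective hh)
    refine ⟨hp, hv, ?_, ?_⟩
    · intro α hα; rw [htup, Function.update_of_ne hα]
    · have hsum : (∑ α, E.tau α) = (∑ α, D.tau α) - D.tau (p.symm j) := by
        rw [htup, sum_update_eq]; ring
      have hDE : D.tau (p.symm j) = E.tau (p.symm j) := by
        rw [htup, Function.update_of_ne hne]
      rw [← hDE]; linarith
  · -- bottom-type step: impossible
    exfalso
    have hnlt : ¬ D.lam (botSym D.p1) < D.lam (topSym D.p0) := lt_asymm hlt
    have hw : fwWinner D.p0 D.p1 D.lam = botSym D.p1 := if_neg hnlt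
    have hl : fwLoser D.p0 D.p1 D.lam = topSym D.p0 := if_neg hnlt
    rw [hw, hl] at htup
    have hsum : (∑ α, E.tau α) = (∑ α, D.tau α) - D.tau (topSym D.p0) := by
      rw [htup, sum_update_eq]; ring
    have h2 := (hD.2.1 2 (by norm_num)).1
    rw [theta_sum D.p0 D.tau] at h2
    rw [show D.p0.symm (Fin.last 3) = topSym D.p0 from rfl] at h2
    linarith

lemma bot_step {A : Type*} [Fintype A] [DecidableEq A]
    {D E : Datum A 3} (p : A ≃ Fin 4) (hst : Step D E) (hD : Valid D)
    (hnn : ¬ (∑ α, E.tau α) < 0) (hbs : botSym E.p1 = p.symm 0)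
    (g v : Fin 4 → Fin 4) (hE0 : ∀ i, E.p0 (p.symm i) = g i)
    (hdec : ∀ f : Fin 4 → Fin 4, Function.Injective f →
      (∀ i, ((g i : Fin 4) : ℕ) = if (f i : ℕ) ≤ (f 0 : ℕ) then (f i : ℕ)
        else if f i = 3 then (f 0 : ℕ) + 1 else (f i : ℕ) + 1) →
      ∀ i, f i = v i)
    (j : Fin 4) (hj : v j = 3) (hj0 : j ≠ 0) :
    D.p1 = E.p1 ∧ (∀ i, D.p0 (p.symm i) = v i) ∧
    (∀ α, α ≠ p.symm 0 → D.tau α = E.tau α) ∧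
    (∑ α, D.tau α) = (∑ α, E.tau α) + E.tau (p.symm j) := by
  obtain ⟨htup, hor⟩ := hst
  rcases hor with ⟨hlt, hp0, hform, _⟩ | ⟨hlt, hp1, hform, _⟩
  · -- top-type step: impossible
    exfalso
    have hw : fwWinner D.p0 D.p1 D.lam = topSym D.p0 := if_pos hlt
    have hl : fwLoser D.p0 D.p1 D.lam = botSym D.p1 := if_pos hlt
    rw [hw, hl] at htup
    have hsum : (∑ α, E.tau α) = (∑ α, D.tau α) - D.tau (botSym D.p1) := by
      rw [htup, sum_update_eq]; ring
    have h2 := (hD.2.1 2 (by norm_num)).2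
    rw [theta_sum D.p1 D.tau] at h2
    rw [show D.p1.symm (Fin.last 3) = botSym D.p1 from rfl] at h2
    exact hnn (by linarith)
  · -- bottom-type step
    have hbsD : botSym D.p1 = p.symm 0 := ((congrArg botSym hp1).symm).trans hbs
    have hv : ∀ i, D.p0 (p.symm i) = v i := by
      refine hdec (fun i => D.p0 (p.symm i)) (D.p0.injective.comp p.symm.injective) ?_
      intro i
      have hcond : (p.symm i = topSym D.p0) ↔ (D.p0 (p.symm i) = (3 : Fin 4)) := by
        rw [show topSym D.p0 = D.p0.symm (3 : Fin 4) from rfl]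
        exact Equiv.eq_symm_apply _
      have h := hform (p.symm i)
      rw [hbsD] at h
      simp only [hcond] at h
      rw [hE0 i] at h
      exact h
    have htop : topSym D.p0 = p.symm j := by
      rw [show topSym D.p0 = D.p0.symm (3 : Fin 4) from rfl, Equiv.symm_apply_eq]
      exact ((hv j).trans hj).symm
    have hnlt : ¬ D.lam (botSym D.p1) < D.lam (topSym D.p0) := lt_asymm hlt
    have hw : fwWinner D.p0 D.p1 D.lam = botSym D.p1 := if_neg hnlt
    have hl : fwLoser D.p0 D.p1 D.lam = topSym D.p0 := if_neg hnlt
    rw [hw, hl, htop, hbsD] at htup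
    have hne : p.symm j ≠ p.symm 0 := fun hh => hj0 (p.symm.injective hh)
    refine ⟨hp1.symm, hv, ?_, ?_⟩
    · intro α hα; rw [htup, Function.update_of_ne hα]
    · have hsum : (∑ α, E.tau α) = (∑ α, D.tau α) - D.tau (p.symm j) := by
        rw [htup, sum_update_eq]; ring
      have hDE : D.tau (p.symm j) = E.tau (p.symm j) := by
        rw [htup, Function.update_of_ne hne]
      rw [← hDE]; linarith

lemma block {A : Type*} [Fintype A] [DecidableEq A]
    (x : ℕ → Datum A 3) (hx : IsBackwardOrbit x) (p : A ≃ Fin 4) (n : ℕ)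
    (h0 : (x n).p0 = p) (h1 : ∀ i, (x n).p1 (p.symm i) = Fin.rev i)
    (ht : (x n).tau (p.symm 1) = -((x n).tau (p.symm 2)))
    (hp : 0 < (x n).tau (p.symm 1)) :
    (∀ k, k < 3 → bwWinner (x (n+k)) ≠ p.symm 1 ∧ bwWinner (x (n+k)) ≠ p.symm 2) ∧
    (x (n+3)).p0 = p ∧ (∀ i, (x (n+3)).p1 (p.symm i) = Fin.rev i) ∧
    ((x (n+3)).tau (p.symm 1) = -((x (n+3)).tau (p.symm 2))) ∧
    0 < (x (n+3)).tau (p.symm 1) := by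
  have hne : ∀ (i j : Fin 4), i ≠ j → p.symm i ≠ p.symm j :=
    fun i j hij h => hij (p.symm.injective h)
  have hs1 := (hx n).1
  have hs2 : Step (x (n+2)) (x (n+1)) := (hx (n+1)).1
  have hs3 : Step (x (n+3)) (x (n+2)) := (hx (n+2)).1
  have hV1 := (hx (n+1)).2
  have hV2 := (hx (n+2)).2
  have hV3 := (hx (n+3)).2
  by_cases hsgn : (∑ α, (x n).tau α) < 0
  · -- all three backward steps are of top type, winner `p.symm 3`
    have hg0 : ∀ i, (x n).p1 (p.symm i) = ![3,2,1,0] i := by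
      intro i; rw [h1 i]; fin_cases i <;> rfl
    obtain ⟨hA0, hA1, hA2, hA3⟩ :=
      top_step p hs1 hV1 hsgn h0 ![3,2,1,0] ![2,1,3,0] hg0 dtop1 2 (by decide) (by decide)
    have ht1b : (x (n+1)).tau (p.symm 1) = (x n).tau (p.symm 1) := hA2 _ (hne 1 3 (by decide))
    have ht1c : (x (n+1)).tau (p.symm 2) = (x n).tau (p.symm 2) := hA2 _ (hne 2 3 (by decide))
    have hsgn1 : (∑ α, (x (n+1)).tau α) < 0 := by rw [hA3]; linarith
    obtain ⟨hB0, hB1, hB2, hB3⟩ :=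
      top_step p hs2 hV2 hsgn1 hA0 ![2,1,3,0] ![1,3,2,0] hA1 dtop2 1 (by decide) (by decide)
    have ht2b : (x (n+2)).tau (p.symm 1) = (x n).tau (p.symm 1) :=
      (hB2 _ (hne 1 3 (by decide))).trans ht1b
    have ht2c : (x (n+2)).tau (p.symm 2) = (x n).tau (p.symm 2) :=
      (hB2 _ (hne 2 3 (by decide))).trans ht1c
    have hsgn2 : (∑ α, (x (n+2)).tau α) < 0 := by rw [hB3, ht1b, hA3]; linarith
    obtain ⟨hC0, hC1, hC2, hC3⟩ :=
      top_step p hs3 hV3 hsgn2 hB0 ![1,3,2,0] ![3,2,1,0] hB1 dtop3 0 (by decide) (by decide)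
    have ht3b : (x (n+3)).tau (p.symm 1) = (x n).tau (p.symm 1) :=
      (hC2 _ (hne 1 3 (by decide))).trans ht2b
    have ht3c : (x (n+3)).tau (p.symm 2) = (x n).tau (p.symm 2) :=
      (hC2 _ (hne 2 3 (by decide))).trans ht2c
    refine ⟨?_, hC0, ?_, ?_, ?_⟩
    · intro k hk
      have w0 : bwWinner (x n) = p.symm 3 := by
        rw [show bwWinner (x n) = topSym (x n).p0 from if_pos hsgn,
          show topSym (x n).p0 = (x n).p0.symm (3 : Fin 4) from rfl, h0]
      have w1 : bwWinner (x (n+1)) = p.symm 3 := by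
        rw [show bwWinner (x (n+1)) = topSym (x (n+1)).p0 from if_pos hsgn1,
          show topSym (x (n+1)).p0 = (x (n+1)).p0.symm (3 : Fin 4) from rfl, hA0]
      have w2 : bwWinner (x (n+2)) = p.symm 3 := by
        rw [show bwWinner (x (n+2)) = topSym (x (n+2)).p0 from if_pos hsgn2,
          show topSym (x (n+2)).p0 = (x (n+2)).p0.symm (3 : Fin 4) from rfl, hB0]
      interval_cases k
      · exact ⟨by rw [Nat.add_zero, w0]; exact hne 3 1 (by decide),
          by rw [Nat.add_zero, w0]; exact hne 3 2 (by decide)⟩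
      · exact ⟨by rw [w1]; exact hne 3 1 (by decide), by rw [w1]; exact hne 3 2 (by decide)⟩
      · exact ⟨by rw [w2]; exact hne 3 1 (by decide), by rw [w2]; exact hne 3 2 (by decide)⟩
    · intro i; rw [hC1 i]; fin_cases i <;> rfl
    · rw [ht3b, ht3c]; exact ht
    · rw [ht3b]; exact hp
  · -- all three backward steps are of bottom type, winner `p.symm 0`
    have hbs : botSym (x n).p1 = p.symm 0 := by
      rw [show botSym (x n).p1 = (x n).p1.symm (Fin.last 3) from rfl, Equiv.symm_apply_eq, h1 0]
      decide
    have hg0 : ∀ i, (x n).p0 (p.symm i) = ![0,1,2,3] i := by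
      intro i; rw [h0, Equiv.apply_symm_apply]; fin_cases i <;> rfl
    obtain ⟨hA0, hA1, hA2, hA3⟩ :=
      bot_step p hs1 hV1 hsgn hbs ![0,1,2,3] ![0,3,1,2] hg0 dbot1 1 (by decide) (by decide)
    have hbs1 : botSym (x (n+1)).p1 = p.symm 0 := (congrArg botSym hA0).trans hbs
    have ht1b : (x (n+1)).tau (p.symm 1) = (x n).tau (p.symm 1) := hA2 _ (hne 1 0 (by decide))
    have ht1c : (x (n+1)).tau (p.symm 2) = (x n).tau (p.symm 2) := hA2 _ (hne 2 0 (by decide))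
    have hsgn1 : ¬ (∑ α, (x (n+1)).tau α) < 0 := by
      rw [not_lt] at hsgn ⊢; rw [hA3]; linarith
    obtain ⟨hB0, hB1, hB2, hB3⟩ :=
      bot_step p hs2 hV2 hsgn1 hbs1 ![0,3,1,2] ![0,2,3,1] hA1 dbot2 2 (by decide) (by decide)
    have hbs2 : botSym (x (n+2)).p1 = p.symm 0 := (congrArg botSym hB0).trans hbs1
    have ht2b : (x (n+2)).tau (p.symm 1) = (x n).tau (p.symm 1) :=
      (hB2 _ (hne 1 0 (by decide))).trans ht1b
    have ht2c : (x (n+2)).tau (p.symm 2) = (x n).tau (p.symm 2) :=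
      (hB2 _ (hne 2 0 (by decide))).trans ht1c
    have hsgn2 : ¬ (∑ α, (x (n+2)).tau α) < 0 := by
      rw [not_lt] at hsgn ⊢; rw [hB3, ht1c, hA3]; linarith
    obtain ⟨hC0, hC1, hC2, hC3⟩ :=
      bot_step p hs3 hV3 hsgn2 hbs2 ![0,2,3,1] ![0,1,2,3] hB1 dbot3 3 (by decide) (by decide)
    have ht3b : (x (n+3)).tau (p.symm 1) = (x n).tau (p.symm 1) :=
      (hC2 _ (hne 1 0 (by decide))).trans ht2b
    have ht3c : (x (n+3)).tau (p.symm 2) = (x n).tau (p.symm 2) :=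
      (hC2 _ (hne 2 0 (by decide))).trans ht2c
    have hp1eq : (x (n+3)).p1 = (x n).p1 := hC0.trans (hB0.trans hA0)
    refine ⟨?_, ?_, ?_, ?_, ?_⟩
    · intro k hk
      have w0 : bwWinner (x n) = p.symm 0 := by
        rw [show bwWinner (x n) = botSym (x n).p1 from if_neg hsgn]; exact hbs
      have w1 : bwWinner (x (n+1)) = p.symm 0 := by
        rw [show bwWinner (x (n+1)) = botSym (x (n+1)).p1 from if_neg hsgn1]; exact hbs1
      have w2 : bwWinner (x (n+2)) = p.symm 0 := by
        rw [show bwWinner (x (n+2)) = botSym (x (n+2)).p1 from if_neg hsgn2]; exact hbs2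
      interval_cases k
      · exact ⟨by rw [Nat.add_zero, w0]; exact hne 0 1 (by decide),
          by rw [Nat.add_zero, w0]; exact hne 0 2 (by decide)⟩
      · exact ⟨by rw [w1]; exact hne 0 1 (by decide), by rw [w1]; exact hne 0 2 (by decide)⟩
      · exact ⟨by rw [w2]; exact hne 0 1 (by decide), by rw [w2]; exact hne 0 2 (by decide)⟩
    · apply Equiv.ext
      intro α
      have hα : p.symm (p α) = α := p.symm_apply_apply α
      have := hC1 (p α)
      rw [hα] at this
      rw [this]
      exact (by decide : ∀ i : Fin 4, (![0,1,2,3] : Fin 4 → Fin 4) i = i) (p α)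
    · intro i; rw [hp1eq]; exact h1 i
    · rw [ht3b, ht3c]; exact ht
    · rw [ht3b]; exact hp

/-- for `d = 4`, `π₁ ∘ π₀⁻¹(i) = 5 - i` and `τ_{π₀⁻¹(2)} = -τ_{π₀⁻¹(3)} > 0`,
neither `π₀⁻¹(2)` nor `π₀⁻¹(3)` is ever a backward winner along the backward orbit, and
after three backward steps the permutation returns to `π`.  (Positions are 0-indexed, so
the paper's `π₀⁻¹(2), π₀⁻¹(3)` are `p0.symm 1, p0.symm 2` and `i ↦ 5 - i` is `Fin.rev`.) -/
theorem cylinder_example_never_wins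
    (x : ℕ → Datum A 3) (hx : IsBackwardOrbit x)
    (hperm : ∀ i : Fin 4, (x 0).p1 ((x 0).p0.symm i) = Fin.rev i)
    (htau : (x 0).tau ((x 0).p0.symm 1) = - (x 0).tau ((x 0).p0.symm 2))
    (hpos : 0 < (x 0).tau ((x 0).p0.symm 1)) :
    (∀ n, bwWinner (x n) ≠ (x 0).p0.symm 1 ∧ bwWinner (x n) ≠ (x 0).p0.symm 2) ∧
    (x 3).p0 = (x 0).p0 ∧ (x 3).p1 = (x 0).p1 := by
  have hH : ∀ k : ℕ, (x (3*k)).p0 = (x 0).p0 ∧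
      (∀ i, (x (3*k)).p1 ((x 0).p0.symm i) = Fin.rev i) ∧
      ((x (3*k)).tau ((x 0).p0.symm 1) = -((x (3*k)).tau ((x 0).p0.symm 2))) ∧
      0 < (x (3*k)).tau ((x 0).p0.symm 1) := by
    intro k
    induction k with
    | zero => exact ⟨rfl, hperm, htau, hpos⟩
    | succ k ih =>
      obtain ⟨a1, a2, a3, a4⟩ := ih
      obtain ⟨_, b1, b2, b3, b4⟩ := block x hx ((x 0).p0) (3*k) a1 a2 a3 a4
      have e3 : 3*(k+1) = 3*k+3 := by ring
      rw [e3]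
      exact ⟨b1, b2, b3, b4⟩
  constructor
  · intro n
    obtain ⟨a1, a2, a3, a4⟩ := hH (n/3)
    obtain ⟨hw, _⟩ := block x hx ((x 0).p0) (3*(n/3)) a1 a2 a3 a4
    have hlt : n % 3 < 3 := Nat.mod_lt _ (by norm_num)
    have := hw (n % 3) hlt
    rwa [Nat.div_add_mod] at this
  · obtain ⟨_, c1, c2, _, _⟩ := block x hx ((x 0).p0) 0 rfl hperm htau hpos
    refine ⟨c1, ?_⟩
    apply Equiv.ext
    intro α
    have hα : (x 0).p0.symm ((x 0).p0 α) = α := Equiv.symm_apply_apply _ _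
    have h3 := c2 ((x 0).p0 α)
    rw [hα] at h3
    have h0 := hperm ((x 0).p0 α)
    rw [hα] at h0
    exact h3.trans h0.symm

end RV
end
end
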